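/- arXiv:1807.10901 — 5 statements merged into one kernel-verified Lean document; each statement's English description precedes it below -/
import Mathlib

section
/- Let f ∈ ℝ[t] be a polynomial of degree two without real zeros. Let a = α(t−β)², c = α′(t−β′)², with α, α′, β, β′ ∈ ℝ and α, α′ ≠ 0, and let b ∈ ℝ[t] have degree at most two with b(β) = 0. Assume the product a·c is nonnegative on ℝ (equivalently α·α′ ≥ 0) and that f divides a·c − b² in ℝ[t]. Then b(β′) = 0. -/
open Polynomial

lemma ivt_aux (g : Polynomial ℝ) {x y : ℝ} (hx : g.eval x < 0) (hy : 0 ≤ g.eval y) :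
    ∃ z, g.eval z = 0 := by
  have hc : ContinuousOn (fun t => g.eval t) (Set.uIcc x y) :=
    g.continuous.continuousOn
  have h0 : (0:ℝ) ∈ Set.uIcc (g.eval x) (g.eval y) :=
    Set.mem_uIcc.2 (Or.inl ⟨hx.le, hy⟩)
  obtain ⟨z, _, hz⟩ := intermediate_value_uIcc hc h0
  exact ⟨z, hz⟩

/-- Let `f ∈ ℝ[t]` have degree two and no real zeros, let `a = α(t - β)²` and
`c = α′(t - β′)²` with `α, α′ ≠ 0` and `α·α′ ≥ 0`, and let `b` have degree at most two
with `b(β) = 0`.  If `f` divides `a·c - b²`, then `b(β′) = 0`. -/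
theorem stmt_3 (f b : Polynomial ℝ) (α α' β β' : ℝ)
    (hfdeg : f.natDegree = 2) (hfroots : ∀ t : ℝ, f.eval t ≠ 0)
    (hα : α ≠ 0) (hα' : α' ≠ 0) (hsign : 0 ≤ α * α')
    (hbdeg : b.natDegree ≤ 2) (hbβ : b.eval β = 0)
    (hdvd : f ∣ (Polynomial.C α * (Polynomial.X - Polynomial.C β) ^ 2) *
      (Polynomial.C α' * (Polynomial.X - Polynomial.C β') ^ 2) - b ^ 2) :
    b.eval β' = 0 := by
  -- b = (X - C β) * b₁
  obtain ⟨b₁, hb⟩ : (X - C β) ∣ b := dvd_iff_isRoot.2 hbβ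
  by_cases hb₁0 : b₁ = 0
  · simp [hb, hb₁0]
  suffices h : b₁.eval β' = 0 by simp [hb, h]
  -- the key factorization
  set p : Polynomial ℝ := C (α * α') * (X - C β') ^ 2 - b₁ ^ 2 with hp
  have hfact : (C α * (X - C β) ^ 2) * (C α' * (X - C β') ^ 2) - b ^ 2
      = (X - C β) ^ 2 * p := by
    rw [hb, hp]; push_cast [C_mul]; ring
  have hcop : IsCoprime (X - C β) f := by
    refine (irreducible_X_sub_C β).coprime_iff_not_dvd.2 ?_
    exact fun hdf => hfroots β (dvd_iff_isRoot.1 hdf)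
  have hdvd' : f ∣ (X - C β) ^ 2 * p := hfact ▸ hdvd
  have hfp : f ∣ p := (hcop.symm.pow_right).dvd_of_dvd_mul_left hdvd'
  -- eval of p at β'
  have hpβ' : p.eval β' = -(b₁.eval β') ^ 2 := by simp [hp]
  by_cases hp0 : p = 0
  · have : (b₁.eval β') ^ 2 = 0 := by
      have := hpβ'; rw [hp0] at this; simpa using this.symm
    exact pow_eq_zero_iff (n := 2) (by norm_num) |>.1 this
  -- p = C μ * f with μ ≠ 0
  obtain ⟨q, hq⟩ := hfp
  have hq0 : q ≠ 0 := fun h => hp0 (by simp [hq, h])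
  have hb₁deg : b₁.natDegree ≤ 1 := by
    have hbne : b ≠ 0 := fun h => hb₁0 (by
      have := hb; rw [h] at this
      rcases mul_eq_zero.1 this.symm with h1 | h1
      · exact absurd h1 (X_sub_C_ne_zero β)
      · exact h1)
    have : b.natDegree = 1 + b₁.natDegree := by
      rw [hb, natDegree_mul (X_sub_C_ne_zero β) hb₁0, natDegree_X_sub_C]
    omega
  have hpdeg : p.natDegree ≤ 2 := by
    have h1 : (C (α * α') * (X - C β') ^ 2).natDegree ≤ 2 :=
      (natDegree_C_mul_le _ _).trans (by simp [natDegree_pow])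
    have h2 : (b₁ ^ 2).natDegree ≤ 2 := by
      rw [natDegree_pow]; omega
    exact (natDegree_sub_le _ _).trans (by omega)
  have hqdeg : q.natDegree = 0 := by
    have : p.natDegree = f.natDegree + q.natDegree := by
      rw [hq, natDegree_mul (fun h => hfroots 0 (by simp [h])) hq0]
    omega
  obtain ⟨μ, hμ⟩ := natDegree_eq_zero.1 hqdeg
  have hμ0 : μ ≠ 0 := fun h => hq0 (by rw [← hμ, h, map_zero])
  have hproots : ∀ t : ℝ, p.eval t ≠ 0 := by
    intro t
    rw [hq, ← hμ]
    simp only [eval_mul, eval_C]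
    exact mul_ne_zero (hfroots t) hμ0
  by_contra hne
  have hpβ'neg : p.eval β' < 0 := by
    rw [hpβ']
    have := pow_pos (abs_pos.2 hne) 2
    nlinarith [sq_abs (b₁.eval β')]
  -- everywhere negative
  have hall : ∀ t : ℝ, p.eval t < 0 := by
    intro t
    rcases lt_or_ge (p.eval t) 0 with h | h
    · exact h
    · obtain ⟨z, hz⟩ := ivt_aux p hpβ'neg h
      exact absurd hz (hproots z)
  have haa : 0 < α * α' := lt_of_le_of_ne hsign (Ne.symm (mul_ne_zero hα hα'))
  -- write b₁ = C e * X + C d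
  set e := b₁.coeff 1 with he
  set d := b₁.coeff 0 with hd
  have hb₁eq : b₁ = C e * X + C d := eq_X_add_C_of_natDegree_le_one hb₁deg
  have hevalp : ∀ t : ℝ, p.eval t = α * α' * (t - β') ^ 2 - (e * t + d) ^ 2 := by
    intro t; rw [hp]; simp [hb₁eq]; try ring
  by_cases he0 : e = 0
  · -- constant b₁; p → ∞, contradiction
    set t := β' + Real.sqrt ((d ^ 2 + 1) / (α * α')) with ht
    have hsq : (t - β') ^ 2 = (d ^ 2 + 1) / (α * α') := by
      rw [ht]
      simp only [add_sub_cancel_left]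
      rw [sq]
      exact Real.mul_self_sqrt (by positivity)
    have := hall t
    rw [hevalp t, hsq, he0] at this
    field_simp at this
    linarith
  · -- b₁ has a real root
    have := hall (-d / e)
    rw [hevalp (-d / e)] at this
    have hz : e * (-d / e) + d = 0 := by field_simp; ring
    rw [hz] at this
    nlinarith [sq_nonneg (-d / e - β')]
end

section
/- Let f, g ∈ ℝ[x₀,…,x_n] be homogeneous of degrees d ≥ 1 and d−1 respectively, with f(e) > 0 and g(e) > 0 for e = (1,0,…,0), and let B(f,g) be their Bézout matrix with entries in ℝ[x₁,…,x_n]. Then the evaluated matrix B(f,g)(x) is positive definite for every nonzero x ∈ ℝⁿ if and only if f is hyperbolic with respect to e and g strictly interlaces f with respect to e. -/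
open MvPolynomial Polynomial

/-- The univariate polynomial `t ↦ f(t • e + v)` obtained by restricting `f` to a line. -/
noncomputable def lineRestrict {n : ℕ} (f : MvPolynomial (Fin n) ℝ) (e v : Fin n → ℝ) :
    Polynomial ℝ :=
  MvPolynomial.aeval (fun i => Polynomial.C (e i) * Polynomial.X + Polynomial.C (v i)) f

/-- A univariate real polynomial has only real roots (counted with multiplicity). -/
def RealRooted (p : Polynomial ℝ) : Prop := p.roots.card = p.natDegree

/-- `f` is hyperbolic with respect to `e`. -/
def Hyperbolic {n : ℕ} (f : MvPolynomial (Fin n) ℝ) (e : Fin n → ℝ) : Prop :=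
  MvPolynomial.eval e f ≠ 0 ∧ ∀ v : Fin n → ℝ, RealRooted (lineRestrict f e v)

/-- `g` interlaces `f` (univariate real-rooted polynomials, `deg g = deg f - 1`). -/
def Interlaces (g f : Polynomial ℝ) : Prop :=
  f.natDegree = g.natDegree + 1 ∧
  ∃ (α : Fin (g.natDegree + 1) → ℝ) (β : Fin g.natDegree → ℝ),
    Monotone α ∧ Monotone β ∧
    f.roots = Finset.univ.val.map α ∧
    g.roots = Finset.univ.val.map β ∧
    ∀ i : Fin g.natDegree, α i.castSucc ≤ β i ∧ β i ≤ α i.succ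

/-- `g` strictly interlaces `f` (univariate). -/
def StrictlyInterlaces (g f : Polynomial ℝ) : Prop :=
  f.natDegree = g.natDegree + 1 ∧
  ∃ (α : Fin (g.natDegree + 1) → ℝ) (β : Fin g.natDegree → ℝ),
    Monotone α ∧ Monotone β ∧
    f.roots = Finset.univ.val.map α ∧
    g.roots = Finset.univ.val.map β ∧
    ∀ i : Fin g.natDegree, α i.castSucc < β i ∧ β i < α i.succ

/-- `g` interlaces `f` with respect to the direction `e`. -/
def InterlacesWrt {n : ℕ} (g f : MvPolynomial (Fin n) ℝ) (e : Fin n → ℝ) : Prop :=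
  ∀ v : Fin n → ℝ, Interlaces (lineRestrict g e v) (lineRestrict f e v)

/-- `g` strictly interlaces `f` with respect to the direction `e`. -/
def StrictlyInterlacesWrt {n : ℕ} (g f : MvPolynomial (Fin n) ℝ) (e : Fin n → ℝ) : Prop :=
  ∀ v : Fin n → ℝ, (∀ c : ℝ, v ≠ c • e) →
    StrictlyInterlaces (lineRestrict g e v) (lineRestrict f e v)

/-- The (closed) hyperbolicity cone of `f` with respect to `e`. -/
def hypCone {n : ℕ} (f : MvPolynomial (Fin n) ℝ) (e : Fin n → ℝ) : Set (Fin n → ℝ) :=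
  closure (connectedComponentIn {a : Fin n → ℝ | MvPolynomial.eval a f ≠ 0} e)

/-- Evaluation of the matrix pencil `xA + yB + zC` at a point `a ∈ ℝ³`. -/
def pencilEval {m : ℕ} (A B C : Matrix (Fin m) (Fin m) ℝ) (a : Fin 3 → ℝ) :
    Matrix (Fin m) (Fin m) ℝ :=
  a 0 • A + a 1 • B + a 2 • C

/-- The matrix pencil `xA + yB + zC` as a matrix of linear forms. -/
noncomputable def pencilPoly {m : ℕ} (A B C : Matrix (Fin m) (Fin m) ℝ) :
    Matrix (Fin m) (Fin m) (MvPolynomial (Fin 3) ℝ) :=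
  Matrix.of fun i j =>
    MvPolynomial.C (A i j) * MvPolynomial.X 0 + MvPolynomial.C (B i j) * MvPolynomial.X 1 +
      MvPolynomial.C (C i j) * MvPolynomial.X 2

/-- `B` is the Bézout matrix of `f` and `g` (with `deg f = d`): writing `s` for the outer
and `t` for the inner polynomial variable, it satisfies
`f(s)g(t) - f(t)g(s) = (s - t) · Σ_{i,j=1}^{d} B_{ij} s^{i-1} t^{j-1}`. -/
def IsBezoutMat {R : Type*} [CommRing R] (d : ℕ) (f g : Polynomial R)
    (B : Matrix (Fin d) (Fin d) R) : Prop :=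
  Polynomial.eval₂ (Polynomial.C.comp Polynomial.C) Polynomial.X f *
      Polynomial.eval₂ (Polynomial.C.comp Polynomial.C) (Polynomial.C Polynomial.X) g -
    Polynomial.eval₂ (Polynomial.C.comp Polynomial.C) (Polynomial.C Polynomial.X) f *
      Polynomial.eval₂ (Polynomial.C.comp Polynomial.C) Polynomial.X g =
  (Polynomial.X - Polynomial.C Polynomial.X) *
    ∑ i : Fin d, ∑ j : Fin d,
      Polynomial.C (Polynomial.C (B i j)) * Polynomial.X ^ (i : ℕ) *
        Polynomial.C Polynomial.X ^ (j : ℕ)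

section BezoutBasics
variable {R S : Type*} [CommRing R] [CommRing S]

lemma IsBezoutMat.ringHomMap {d : ℕ} {f g : R[X]} {B : Matrix (Fin d) (Fin d) R}
    (hB : IsBezoutMat d f g B) (φ : R →+* S) :
    IsBezoutMat d (f.map φ) (g.map φ) (B.map φ) := by
  unfold IsBezoutMat at hB ⊢
  have h1 : ∀ (f : R[X]),
      Polynomial.map (mapRingHom φ) (Polynomial.eval₂ (Polynomial.C.comp Polynomial.C) Polynomial.X f)
        = Polynomial.eval₂ (Polynomial.C.comp Polynomial.C) Polynomial.X (f.map φ) := by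
    intro f
    rw [← Polynomial.coe_mapRingHom, Polynomial.hom_eval₂, Polynomial.eval₂_map]
    congr 1
    · ext a; simp
    · simp
  have h2 : ∀ (f : R[X]),
      Polynomial.map (mapRingHom φ)
          (Polynomial.eval₂ (Polynomial.C.comp Polynomial.C) (Polynomial.C Polynomial.X) f)
        = Polynomial.eval₂ (Polynomial.C.comp Polynomial.C) (Polynomial.C Polynomial.X) (f.map φ) := by
    intro f
    rw [← Polynomial.coe_mapRingHom, Polynomial.hom_eval₂, Polynomial.eval₂_map]
    congr 1
    · ext a; simp
    · simp
  have := congrArg (Polynomial.map (mapRingHom φ)) hB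
  simpa [Polynomial.map_sub, Polynomial.map_mul, Polynomial.map_sum, Polynomial.map_pow,
    h1, h2, Matrix.map_apply] using this

lemma IsBezoutMat.subst {d : ℕ} {f g : R[X]} {B : Matrix (Fin d) (Fin d) R}
    (hB : IsBezoutMat d f g B) (b : R) :
    f * Polynomial.C (g.eval b) - Polynomial.C (f.eval b) * g =
      (Polynomial.X - Polynomial.C b) *
        ∑ i : Fin d, ∑ j : Fin d,
          Polynomial.C (B i j) * Polynomial.X ^ (i : ℕ) * Polynomial.C b ^ (j : ℕ) := by
  unfold IsBezoutMat at hB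
  have h1 : ∀ (f : R[X]),
      Polynomial.map (evalRingHom b)
          (Polynomial.eval₂ (Polynomial.C.comp Polynomial.C) Polynomial.X f) = f := by
    intro f
    rw [← Polynomial.coe_mapRingHom, Polynomial.hom_eval₂]
    have h3 : (mapRingHom (evalRingHom b)).comp (Polynomial.C.comp Polynomial.C)
        = (Polynomial.C : R →+* R[X]) := by
      ext a; simp
    have h4 : (mapRingHom (evalRingHom b)) Polynomial.X = Polynomial.X := by simp
    rw [h3, h4, Polynomial.eval₂_C_X]
  have h2 : ∀ (f : R[X]),
      Polynomial.map (evalRingHom b)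
          (Polynomial.eval₂ (Polynomial.C.comp Polynomial.C) (Polynomial.C Polynomial.X) f)
        = Polynomial.C (f.eval b) := by
    intro f
    rw [← Polynomial.coe_mapRingHom, Polynomial.hom_eval₂]
    have h3 : (mapRingHom (evalRingHom b)).comp (Polynomial.C.comp Polynomial.C)
        = (Polynomial.C : R →+* R[X]) := by
      ext a; simp
    have h4 : (mapRingHom (evalRingHom b)) (Polynomial.C Polynomial.X) = Polynomial.C b := by
      simp
    rw [h3, h4]
    have h6 := Polynomial.hom_eval₂ f (RingHom.id R) (Polynomial.C : R →+* R[X]) b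
    simp only [RingHom.comp_id] at h6
    rw [← h6]
    rfl
  have := congrArg (Polynomial.map (evalRingHom b)) hB
  simpa [Polynomial.map_sub, Polynomial.map_mul, Polynomial.map_sum, Polynomial.map_pow,
    h1, h2] using this

lemma IsBezoutMat.eval_eval {d : ℕ} {f g : R[X]} {B : Matrix (Fin d) (Fin d) R}
    (hB : IsBezoutMat d f g B) (a b : R) :
    f.eval a * g.eval b - f.eval b * g.eval a =
      (a - b) * ∑ i : Fin d, ∑ j : Fin d, B i j * a ^ (i : ℕ) * b ^ (j : ℕ) := by
  have := congrArg (Polynomial.eval a) (hB.subst b)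
  simpa [Polynomial.eval_finset_sum] using this

lemma IsBezoutMat.diag {d : ℕ} {f g : R[X]} {B : Matrix (Fin d) (Fin d) R}
    (hB : IsBezoutMat d f g B) {α : R} (hα : f.eval α = 0) :
    (Polynomial.derivative f).eval α * g.eval α =
      ∑ i : Fin d, ∑ j : Fin d, B i j * α ^ (i : ℕ) * α ^ (j : ℕ) := by
  have h := hB.subst α
  rw [hα, map_zero, zero_mul, sub_zero] at h
  have := congrArg (fun p => (Polynomial.derivative p).eval α) h
  simpa [Polynomial.derivative_mul, Polynomial.eval_finset_sum, hα] using this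

end BezoutBasics

-- quadratic form rearrangement
lemma quadForm_eq {d : ℕ} (B : Matrix (Fin d) (Fin d) ℝ) (u v : Fin d → ℝ) :
    dotProduct u (B.mulVec v) = ∑ i : Fin d, ∑ j : Fin d, B i j * u i * v j := by
  simp only [dotProduct, Matrix.mulVec, Finset.mul_sum]
  apply Finset.sum_congr rfl
  intro i _
  apply Finset.sum_congr rfl
  intro j _
  ring

lemma im_eq_zero_of_posDef {d : ℕ} {p q : Polynomial ℝ} {B : Matrix (Fin d) (Fin d) ℝ}
    (hd : 0 < d) (hB : IsBezoutMat d p q B) (hpd : B.PosDef) (z : ℂ)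
    (hz : (p.map (algebraMap ℝ ℂ)).eval z = 0) : z.im = 0 := by
  by_contra him
  set φ := algebraMap ℝ ℂ
  have hBc := hB.ringHomMap φ
  -- conjugate root
  have hconj : ∀ w : ℂ, (p.map φ).eval ((starRingEnd ℂ) w) = (starRingEnd ℂ) ((p.map φ).eval w) := by
    intro w
    rw [Polynomial.eval_map, Polynomial.eval_map, Polynomial.hom_eval₂]
    congr 1
    ext a
    simp [φ]
  have hz' : (p.map φ).eval ((starRingEnd ℂ) z) = 0 := by rw [hconj, hz, map_zero]
  have key := hBc.eval_eval ((starRingEnd ℂ) z) z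
  rw [hz, hz', zero_mul, zero_mul, sub_zero] at key
  have hne : (starRingEnd ℂ) z - z ≠ 0 := by
    rw [sub_ne_zero]
    intro hc
    exact him (Complex.conj_eq_iff_im.mp hc)
  have hS : (∑ i : Fin d, ∑ j : Fin d,
      (B.map φ) i j * ((starRingEnd ℂ) z) ^ (i : ℕ) * z ^ (j : ℕ)) = 0 := by
    rcases mul_eq_zero.mp key.symm with h | h
    · exact absurd h hne
    · exact h
  -- take real parts
  set u : Fin d → ℝ := fun i => (z ^ (i : ℕ)).re with hu
  set w : Fin d → ℝ := fun i => (z ^ (i : ℕ)).im with hw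
  have hre : (∑ i : Fin d, ∑ j : Fin d,
      B i j * u i * u j) + (∑ i : Fin d, ∑ j : Fin d, B i j * w i * w j) = 0 := by
    have := congrArg Complex.re hS
    simp only [Complex.re_sum, Complex.zero_re] at this
    rw [← this, ← Finset.sum_add_distrib]
    apply Finset.sum_congr rfl
    intro i _
    rw [← Finset.sum_add_distrib]
    apply Finset.sum_congr rfl
    intro j _
    have h2 : ((starRingEnd ℂ) z ^ (i:ℕ)).im = -(z ^ (i:ℕ)).im := by simp [← map_pow]
    have h3 : ((starRingEnd ℂ) z ^ (i:ℕ)).re = (z ^ (i:ℕ)).re := by simp [← map_pow]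
    simp only [Matrix.map_apply, Complex.mul_re, Complex.mul_im, h2, h3, φ,
      Complex.coe_algebraMap, Complex.ofReal_re, Complex.ofReal_im, u, w]
    ring
  have hune : u ≠ 0 := by
    intro hc
    have h1 : u ⟨0, hd⟩ = 0 := by rw [hc]; rfl
    rw [hu] at h1
    simp at h1
  have hpos : 0 < ∑ i : Fin d, ∑ j : Fin d, B i j * u i * u j := by
    have := (Matrix.posDef_iff_dotProduct_mulVec.mp hpd).2 hune
    rwa [star_trivial, quadForm_eq] at this
  have hnn : 0 ≤ ∑ i : Fin d, ∑ j : Fin d, B i j * w i * w j := by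
    have := (Matrix.posSemidef_iff_dotProduct_mulVec.mp hpd.posSemidef).2 w
    rwa [star_trivial, quadForm_eq] at this
  linarith

lemma realRooted_of_all_roots_real {p : Polynomial ℝ} (hp : p ≠ 0)
    (h : ∀ z : ℂ, (p.map (algebraMap ℝ ℂ)).eval z = 0 → z.im = 0) : RealRooted p := by
  classical
  set φ := algebraMap ℝ ℂ
  have hφ : Function.Injective φ := (algebraMap ℝ ℂ).injective
  have hpc : p.map φ ≠ 0 := (Polynomial.map_ne_zero_iff hφ).mpr hp
  have hsplit : (p.map φ).Splits := IsAlgClosed.splits _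
  have hcard : (p.map φ).roots.card = (p.map φ).natDegree :=
    (Polynomial.splits_iff_card_roots).mp hsplit
  have hdeg : (p.map φ).natDegree = p.natDegree := Polynomial.natDegree_map_eq_of_injective hφ p
  have hle : (p.map φ).roots ≤ p.roots.map Complex.ofReal := by
    rw [Multiset.le_iff_count]
    intro z
    by_cases hz : z ∈ (p.map φ).roots
    · have hzim : z.im = 0 := h z ((Polynomial.mem_roots hpc).mp hz)
      have hzre : ((z.re : ℝ) : ℂ) = z := by
        apply Complex.ext <;> simp [hzim]
      have hinj : Function.Injective Complex.ofReal := Complex.ofReal_injective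
      calc Multiset.count z (p.map φ).roots
          = Multiset.count ((z.re : ℝ) : ℂ) (p.map φ).roots := by rw [hzre]
        _ = Polynomial.rootMultiplicity ((z.re : ℝ) : ℂ) (p.map φ) := Polynomial.count_roots _
        _ = Polynomial.rootMultiplicity z.re p := (Polynomial.eq_rootMultiplicity_map hφ _).symm
        _ = Multiset.count z.re p.roots := (Polynomial.count_roots _).symm
        _ = Multiset.count ((z.re : ℝ) : ℂ) (p.roots.map Complex.ofReal) :=
            (Multiset.count_map_eq_count' Complex.ofReal _ hinj _).symm
        _ = Multiset.count z (p.roots.map Complex.ofReal) := by rw [hzre]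
        _ ≤ Multiset.count z (p.roots.map Complex.ofReal) := le_rfl
    · rw [Multiset.count_eq_zero_of_notMem hz]
      exact Nat.zero_le _
  have h1 : p.natDegree ≤ p.roots.card := by
    calc p.natDegree = (p.map φ).roots.card := by rw [hcard, hdeg]
      _ ≤ (p.roots.map Complex.ofReal).card := Multiset.card_le_card hle
      _ = p.roots.card := Multiset.card_map _ _
  exact le_antisymm (Polynomial.card_roots' p) h1

-- general helper lemmas (univariate, real)
lemma eq_prod_of_roots_eq {m : ℕ} {p : Polynomial ℝ} (hp : p ≠ 0) {v : Fin m → ℝ}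
    (hroots : p.roots = Finset.univ.val.map v) (hcard : p.natDegree = m) :
    p = Polynomial.C p.leadingCoeff * ∏ k : Fin m, (Polynomial.X - Polynomial.C (v k)) := by
  have hcard' : p.roots.card = p.natDegree := by
    rw [hroots, Multiset.card_map, hcard]; simp
  have hsplits := (Polynomial.splits_iff_card_roots).mpr hcard'
  have h := hsplits.eq_prod_roots
  rw [hroots, Multiset.map_map] at h
  rw [Finset.prod_eq_multiset_prod]
  simpa [Function.comp] using h

lemma deriv_eval_prod {m : ℕ} (c : ℝ) (v : Fin m → ℝ) (k : Fin m) :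
    (Polynomial.derivative
        (Polynomial.C c * ∏ j : Fin m, (Polynomial.X - Polynomial.C (v j)))).eval (v k) =
      c * ∏ j ∈ Finset.univ.erase k, (v k - v j) := by
  classical
  rw [Polynomial.derivative_C_mul, Polynomial.eval_mul, Polynomial.eval_C]
  congr 1
  have h1 : Polynomial.derivative (∏ j : Fin m, (Polynomial.X - Polynomial.C (v j)))
      = ∑ i : Fin m, (∏ j ∈ Finset.univ.erase i, (Polynomial.X - Polynomial.C (v j))) *
          Polynomial.derivative (Polynomial.X - Polynomial.C (v i)) := by
    rw [Finset.prod_eq_multiset_prod, Polynomial.derivative_prod, ← Finset.sum_eq_multiset_sum]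
    apply Finset.sum_congr rfl
    intro i _
    rw [← Finset.erase_val, ← Finset.prod_eq_multiset_prod]
  rw [h1, Polynomial.eval_finset_sum]
  rw [Finset.sum_eq_single k]
  · rw [Polynomial.eval_mul, Polynomial.eval_prod]
    simp
  · intro i _ hik
    rw [Polynomial.eval_mul, Polynomial.eval_prod]
    rw [Finset.prod_eq_zero (Finset.mem_erase.mpr ⟨Ne.symm hik, Finset.mem_univ k⟩) (by simp)]
    simp
  · intro h; exact absurd (Finset.mem_univ k) h


section CoreBackward
open Matrix

lemma core_backward {m : ℕ} {p q : Polynomial ℝ} (hp : p.natDegree = m + 1)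
    (hq : q.natDegree = m) (hlp : 0 < p.leadingCoeff) (hlq : 0 < q.leadingCoeff)
    {B : Matrix (Fin (m + 1)) (Fin (m + 1)) ℝ} (hB : IsBezoutMat (m + 1) p q B)
    (hsi : StrictlyInterlaces q p) : B.PosDef := by
  classical
  subst hq
  obtain ⟨hdeg, α, β, hαm, hβm, hproots, hqroots, hint⟩ := hsi
  have hp0 : p ≠ 0 := fun h => by simp [h] at hlp
  have hq0 : q ≠ 0 := fun h => by simp [h] at hlq
  have hαs : StrictMono α := Fin.strictMono_iff_lt_succ.mpr
    fun i => lt_trans (hint i).1 (hint i).2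
  have hpfac := eq_prod_of_roots_eq hp0 hproots hp
  have hqfac := eq_prod_of_roots_eq hq0 hqroots rfl
  have hproot : ∀ k, p.eval (α k) = 0 := by
    intro k
    have hk : α k ∈ p.roots := by
      rw [hproots]
      exact Multiset.mem_map_of_mem _ (by simp)
    exact (Polynomial.mem_roots hp0).mp hk
  -- diagonal positivity
  have hdiagpos : ∀ k, 0 < (Polynomial.derivative p).eval (α k) * q.eval (α k) := by
    intro k
    have hd := deriv_eval_prod p.leadingCoeff α k
    rw [← hpfac] at hd
    have hqev : q.eval (α k) = q.leadingCoeff * ∏ j : Fin (q.natDegree), (α k - β j) := by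
      conv_lhs => rw [hqfac]
      simp [Polynomial.eval_prod]
    have himg : Finset.univ.erase k = Finset.image k.succAbove Finset.univ := by
      ext j
      simp only [Finset.mem_erase, Finset.mem_univ, and_true, Finset.mem_image, true_and]
      constructor
      · intro hj
        obtain ⟨z, hz⟩ := Fin.exists_succAbove_eq (Ne.symm hj |>.symm)
        exact ⟨z, hz⟩
      · rintro ⟨z, rfl⟩
        exact Fin.succAbove_ne k z
    have hinj : Function.Injective k.succAbove := Fin.succAbove_right_injective
    rw [hd, hqev, himg, Finset.prod_image (fun a _ b _ h => hinj h)]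
    have hpair : (∏ j : Fin q.natDegree, (α k - α (k.succAbove j))) *
        (∏ j : Fin q.natDegree, (α k - β j)) =
        ∏ j : Fin q.natDegree, ((α k - α (k.succAbove j)) * (α k - β j)) :=
      (Finset.prod_mul_distrib).symm
    have hpos : 0 < ∏ j : Fin q.natDegree, ((α k - α (k.succAbove j)) * (α k - β j)) := by
      apply Finset.prod_pos
      intro j _
      by_cases hjk : (j.castSucc : Fin (q.natDegree + 1)) < k
      · have h1 : k.succAbove j = j.castSucc := Fin.succAbove_of_castSucc_lt k j hjk
        have h2 : α j.castSucc < α k := hαs hjk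
        have h3 : β j < α k := by
          refine lt_of_lt_of_le (hint j).2 (hαm ?_)
          rw [Fin.le_def]
          rw [Fin.lt_def] at hjk
          simpa using hjk
        rw [h1]
        exact mul_pos (by linarith) (by linarith)
      · push_neg at hjk
        have h1 : k.succAbove j = j.succ := Fin.succAbove_of_le_castSucc k j hjk
        have h2 : α k ≤ α j.castSucc := hαm hjk
        have h3 : α j.castSucc < α j.succ := hαs (Fin.castSucc_lt_succ (i := j))
        have h4 : α j.castSucc < β j := (hint j).1
        rw [h1]
        exact mul_pos_of_neg_of_neg (by linarith) (by linarith)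
    calc (0:ℝ) < (p.leadingCoeff * q.leadingCoeff) *
        ∏ j : Fin q.natDegree, ((α k - α (k.succAbove j)) * (α k - β j)) :=
          mul_pos (mul_pos hlp hlq) hpos
      _ = p.leadingCoeff * (∏ j : Fin q.natDegree, (α k - α (k.succAbove j))) *
          (q.leadingCoeff * ∏ j : Fin q.natDegree, (α k - β j)) := by
          rw [← hpair]; ring
  -- off-diagonal vanishing
  have hoff : ∀ k l : Fin (q.natDegree + 1), k ≠ l →
      (∑ i : Fin (q.natDegree + 1), ∑ j : Fin (q.natDegree + 1),
        B i j * (α k) ^ (i : ℕ) * (α l) ^ (j : ℕ)) = 0 := by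
    intro k l hkl
    have h := hB.eval_eval (α k) (α l)
    rw [hproot k, hproot l, zero_mul, zero_mul, sub_zero] at h
    have hne : α k - α l ≠ 0 := sub_ne_zero.mpr (fun hc => hkl (hαs.injective hc))
    rcases mul_eq_zero.mp h.symm with h' | h'
    · exact absurd h' hne
    · exact h'
  set W : Matrix (Fin (q.natDegree + 1)) (Fin (q.natDegree + 1)) ℝ :=
    Matrix.of (fun i j => α j ^ (i : ℕ)) with hW
  set Dv : Fin (q.natDegree + 1) → ℝ :=
    fun k => (Polynomial.derivative p).eval (α k) * q.eval (α k) with hDv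
  have hentry : ∀ x y : Fin (q.natDegree + 1), (Wᵀ * B * W) x y =
      ∑ i : Fin (q.natDegree + 1), ∑ j : Fin (q.natDegree + 1), B i j * α x ^ (i : ℕ) * α y ^ (j : ℕ) := by
    intro x y
    calc (Wᵀ * B * W) x y = ∑ j : Fin (q.natDegree + 1), (∑ i : Fin (q.natDegree + 1), α x ^ (i : ℕ) * B i j) * α y ^ (j : ℕ) := by
          simp [Matrix.mul_apply, Matrix.transpose_apply, hW]
      _ = ∑ j : Fin (q.natDegree + 1), ∑ i : Fin (q.natDegree + 1), (α x ^ (i : ℕ) * B i j) * α y ^ (j : ℕ) := by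
          simp [Finset.sum_mul]
      _ = ∑ i : Fin (q.natDegree + 1), ∑ j : Fin (q.natDegree + 1), B i j * α x ^ (i : ℕ) * α y ^ (j : ℕ) := by
          rw [Finset.sum_comm]
          apply Finset.sum_congr rfl; intro i _
          apply Finset.sum_congr rfl; intro j _
          ring
  have hWBW : Wᵀ * B * W = Matrix.diagonal Dv := by
    ext x y
    by_cases hxy : x = y
    · subst hxy
      rw [hentry, Matrix.diagonal_apply_eq, hDv]
      exact (hB.diag (hproot x)).symm
    · rw [hentry, Matrix.diagonal_apply_ne _ hxy]
      exact hoff x y hxy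
  have hWdet : W.det ≠ 0 := by
    have hWv : W = (Matrix.vandermonde α)ᵀ := by
      ext i j; simp [hW, Matrix.vandermonde]
    rw [hWv, Matrix.det_transpose, Matrix.det_vandermonde]
    apply Finset.prod_ne_zero_iff.mpr
    intro i _
    apply Finset.prod_ne_zero_iff.mpr
    intro j hj
    exact sub_ne_zero.mpr (hαs (Finset.mem_Ioi.mp hj)).ne'
  have hWu : IsUnit W.det := isUnit_iff_ne_zero.mpr hWdet
  have : Invertible W := W.invertibleOfIsUnitDet hWu
  have hBeq : B = (Wᵀ)⁻¹ * Matrix.diagonal Dv * W⁻¹ := by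
    rw [← hWBW]
    have hWTu : IsUnit (Wᵀ).det := by rwa [Matrix.det_transpose]
    rw [Matrix.mul_assoc (Wᵀ) B W, Matrix.nonsing_inv_mul_cancel_left _ _ hWTu,
      Matrix.mul_nonsing_inv_cancel_right _ _ hWu]
  have hquad : ∀ y : Fin (q.natDegree + 1) → ℝ,
      dotProduct y ((Wᵀ * B * W).mulVec y)
        = dotProduct (W.mulVec y) (B.mulVec (W.mulVec y)) := by
    intro y
    rw [← Matrix.mulVec_mulVec, ← Matrix.mulVec_mulVec, dotProduct_mulVec y Wᵀ,
      Matrix.vecMul_transpose]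
  rw [Matrix.posDef_iff_dotProduct_mulVec]
  constructor
  · show Bᴴ = B
    have htrans : Bᵀ = B := by
      rw [hBeq, Matrix.transpose_mul, Matrix.transpose_mul, Matrix.diagonal_transpose,
        Matrix.transpose_nonsing_inv, Matrix.transpose_nonsing_inv,
        Matrix.transpose_transpose, ← Matrix.mul_assoc]
    have hct : Bᴴ = Bᵀ := by
      ext i j
      simp [Matrix.conjTranspose_apply, Matrix.transpose_apply]
    rw [hct, htrans]
  · intro v hv
    set y : Fin (q.natDegree + 1) → ℝ := W⁻¹.mulVec v with hy
    have hvy : W.mulVec y = v := by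
      rw [hy, Matrix.mulVec_mulVec, Matrix.mul_nonsing_inv _ hWu, Matrix.one_mulVec]
    have hy0 : y ≠ 0 := fun h => hv (by rw [← hvy, h, Matrix.mulVec_zero])
    have : dotProduct (star v) (B.mulVec v) =
        dotProduct y ((Matrix.diagonal Dv).mulVec y) := by
      rw [star_trivial, ← hvy, ← hquad, hWBW]
    rw [this]
    have hdot : dotProduct y ((Matrix.diagonal Dv).mulVec y)
        = ∑ i : Fin (q.natDegree + 1), Dv i * y i * y i := by
      simp [dotProduct, Matrix.mulVec_diagonal]
      apply Finset.sum_congr rfl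
      intro i _; ring
    rw [hdot]
    have hDvpos : ∀ k, 0 < Dv k := by
      intro k
      simpa [hDv] using hdiagpos k
    obtain ⟨i0, hi0⟩ := Function.ne_iff.mp hy0
    apply Finset.sum_pos'
    · intro i _
      nlinarith [hDvpos i, sq_nonneg (y i)]
    · refine ⟨i0, Finset.mem_univ i0, ?_⟩
      have h1 := hDvpos i0
      have h2 : y i0 ≠ 0 := hi0
      have h3 : 0 < y i0 * y i0 := by
        rcases lt_or_gt_of_ne h2 with h | h
        · nlinarith
        · nlinarith
      nlinarith

end CoreBackward


lemma multiset_sorted_enum {m : ℕ} {s : Multiset ℝ} (hnd : s.Nodup) (hc : s.card = m) :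
    ∃ v : Fin m → ℝ, StrictMono v ∧ s = Finset.univ.val.map v := by
  classical
  have htc : s.toFinset.card = m := by rw [Multiset.toFinset_card_of_nodup hnd, hc]
  set e := s.toFinset.orderIsoOfFin htc with he
  have hmono : StrictMono (fun i => (e i : ℝ)) := fun i j hij =>
    Subtype.coe_lt_coe.mpr (e.strictMono hij)
  refine ⟨fun i => (e i : ℝ), hmono, ?_⟩
  have himg : Finset.image (fun i => (e i : ℝ)) Finset.univ = s.toFinset := by
    apply Finset.eq_of_subset_of_card_le
    · intro x hx
      obtain ⟨i, _, rfl⟩ := Finset.mem_image.mp hx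
      exact (e i).2
    · rw [Finset.card_image_of_injective _ hmono.injective, htc, Finset.card_univ,
        Fintype.card_fin]
  calc s = s.toFinset.val := by rw [Multiset.toFinset_val, Multiset.dedup_eq_self.mpr hnd]
    _ = (Finset.image (fun i => (e i : ℝ)) Finset.univ).val := by rw [himg]
    _ = Finset.univ.val.map (fun i => (e i : ℝ)) := by
        rw [Finset.image_val, Multiset.dedup_eq_self.mpr
          (Multiset.Nodup.map hmono.injective Finset.univ.nodup)]

section CoreForward
open Matrix

lemma core_forward {m : ℕ} {p q : Polynomial ℝ} (hp : p.natDegree = m + 1)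
    (hq : q.natDegree = m) (hlp : 0 < p.leadingCoeff) (hlq : 0 < q.leadingCoeff)
    {B : Matrix (Fin (m + 1)) (Fin (m + 1)) ℝ} (hB : IsBezoutMat (m + 1) p q B)
    (hpd : B.PosDef) : RealRooted p ∧ StrictlyInterlaces q p := by
  classical
  subst hq
  have hp0 : p ≠ 0 := fun h => by simp [h] at hlp
  have hq0 : q ≠ 0 := fun h => by simp [h] at hlq
  have hrr : RealRooted p := realRooted_of_all_roots_real hp0
    (fun z hz => im_eq_zero_of_posDef (Nat.succ_pos _) hB hpd z hz)
  -- diagonal positivity at roots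
  have hdiag : ∀ t : ℝ, p.eval t = 0 → 0 < (Polynomial.derivative p).eval t * q.eval t := by
    intro t ht
    have h := hB.diag ht
    have hu : (fun i : Fin (q.natDegree + 1) => t ^ (i : ℕ)) ≠ 0 := by
      intro hc
      have h0 : (fun i : Fin (q.natDegree + 1) => t ^ (i : ℕ)) 0 = 0 := by rw [hc]; rfl
      simp at h0
    have hq' := (Matrix.posDef_iff_dotProduct_mulVec.mp hpd).2 hu
    rw [star_trivial, quadForm_eq] at hq'
    rw [h]
    exact hq'
  -- simple roots
  have hnd : p.roots.Nodup := by
    rw [Multiset.nodup_iff_count_le_one]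
    intro t
    by_contra hcnt
    push_neg at hcnt
    have hmem : t ∈ p.roots := Multiset.count_pos.mp (by omega)
    have ht : p.eval t = 0 := (Polynomial.mem_roots hp0).mp hmem
    have hmult : 2 ≤ p.rootMultiplicity t := by
      rw [← Polynomial.count_roots]; omega
    have hder0 : (Polynomial.derivative p).eval t = 0 := by
      have h1 := Polynomial.derivative_rootMultiplicity_of_root (p := p) (t := t) ht
      by_cases hd0 : Polynomial.derivative p = 0
      · rw [hd0]; simp
      · exact (Polynomial.rootMultiplicity_pos hd0).mp (by omega)
    have := hdiag t ht
    rw [hder0, zero_mul] at this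
    exact lt_irrefl _ this
  obtain ⟨α, hαs, hproots⟩ := multiset_sorted_enum hnd (by rw [hrr, hp])
  have hproot : ∀ k, p.eval (α k) = 0 := by
    intro k
    have hk : α k ∈ p.roots := by
      rw [hproots]; exact Multiset.mem_map_of_mem _ (by simp)
    exact (Polynomial.mem_roots hp0).mp hk
  have hpfac := eq_prod_of_roots_eq hp0 hproots hp
  have hder : ∀ k, (Polynomial.derivative p).eval (α k) =
      p.leadingCoeff * ∏ j ∈ Finset.univ.erase k, (α k - α j) := by
    intro k
    have hd := deriv_eval_prod p.leadingCoeff α k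
    rw [← hpfac] at hd
    exact hd
  -- sign alternation of q at consecutive roots of p
  have hqalt : ∀ k : Fin q.natDegree,
      q.eval (α k.castSucc) * q.eval (α k.succ) < 0 := by
    intro k
    have h1 := hdiag (α k.castSucc) (hproot _)
    have h2 := hdiag (α k.succ) (hproot _)
    rw [hder] at h1 h2
    set k1 := k.castSucc with hk1
    set k2 := k.succ with hk2
    have hk12 : k1 ≠ k2 := (Fin.castSucc_lt_succ (i := k)).ne
    have hmem1 : k2 ∈ Finset.univ.erase k1 :=
      Finset.mem_erase.mpr ⟨hk12.symm, Finset.mem_univ _⟩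
    have hmem2 : k1 ∈ Finset.univ.erase k2 :=
      Finset.mem_erase.mpr ⟨hk12, Finset.mem_univ _⟩
    have hP1 : (∏ j ∈ Finset.univ.erase k1, (α k1 - α j)) =
        (α k1 - α k2) * ∏ j ∈ (Finset.univ.erase k1).erase k2, (α k1 - α j) :=
      (Finset.mul_prod_erase _ _ hmem1).symm
    have hP2 : (∏ j ∈ Finset.univ.erase k2, (α k2 - α j)) =
        (α k2 - α k1) * ∏ j ∈ (Finset.univ.erase k2).erase k1, (α k2 - α j) :=
      (Finset.mul_prod_erase _ _ hmem2).symm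
    have hsetEq : (Finset.univ.erase k1).erase k2 = (Finset.univ.erase k2).erase k1 :=
      Finset.erase_right_comm
    have hprodpos : 0 < ∏ j ∈ (Finset.univ.erase k1).erase k2,
        ((α k1 - α j) * (α k2 - α j)) := by
      apply Finset.prod_pos
      intro j hj
      have hj1 : j ≠ k2 := (Finset.mem_erase.mp hj).1
      have hj2 : j ≠ k1 := (Finset.mem_erase.mp (Finset.mem_of_mem_erase hj)).1
      have hv1 : (k1 : ℕ) = (k : ℕ) := rfl
      have hv2 : (k2 : ℕ) = (k : ℕ) + 1 := rfl
      have hcase : (j : ℕ) < (k1 : ℕ) ∨ (k2 : ℕ) < (j : ℕ) := by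
        have hne1 : (j : ℕ) ≠ (k1 : ℕ) := fun h => hj2 (Fin.ext h)
        have hne2 : (j : ℕ) ≠ (k2 : ℕ) := fun h => hj1 (Fin.ext h)
        omega
      rcases hcase with h | h
      · have ha1 : α j < α k1 := hαs (by rwa [Fin.lt_def])
        have ha2 : α j < α k2 := hαs (by rw [Fin.lt_def]; omega)
        exact mul_pos (by linarith) (by linarith)
      · have ha1 : α k1 < α j := hαs (by rw [Fin.lt_def]; omega)
        have ha2 : α k2 < α j := hαs (by rwa [Fin.lt_def])
        exact mul_pos_of_neg_of_neg (by linarith) (by linarith)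
    have hPP : (∏ j ∈ Finset.univ.erase k1, (α k1 - α j)) *
        (∏ j ∈ Finset.univ.erase k2, (α k2 - α j)) < 0 := by
      rw [hP1, hP2, ← hsetEq]
      have hcomb : (∏ j ∈ (Finset.univ.erase k1).erase k2, (α k1 - α j)) *
          (∏ j ∈ (Finset.univ.erase k1).erase k2, (α k2 - α j)) =
          ∏ j ∈ (Finset.univ.erase k1).erase k2, ((α k1 - α j) * (α k2 - α j)) :=
        (Finset.prod_mul_distrib).symm
      have h12 : α k1 < α k2 := hαs (Fin.castSucc_lt_succ (i := k))
      have : (α k1 - α k2) * (∏ j ∈ (Finset.univ.erase k1).erase k2, (α k1 - α j)) *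
          ((α k2 - α k1) * (∏ j ∈ (Finset.univ.erase k1).erase k2, (α k2 - α j))) =
          ((α k1 - α k2) * (α k2 - α k1)) *
            ∏ j ∈ (Finset.univ.erase k1).erase k2, ((α k1 - α j) * (α k2 - α j)) := by
        rw [← hcomb]; ring
      rw [this]
      apply mul_neg_of_neg_of_pos _ hprodpos
      nlinarith
    -- combine
    by_contra hq12
    push_neg at hq12
    have e1 : 0 < (p.leadingCoeff * (∏ j ∈ Finset.univ.erase k1, (α k1 - α j)) * q.eval (α k1)) *
        (p.leadingCoeff * (∏ j ∈ Finset.univ.erase k2, (α k2 - α j)) * q.eval (α k2)) :=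
      mul_pos h1 h2
    have hA : p.leadingCoeff * (∏ j ∈ Finset.univ.erase k1, (α k1 - α j)) *
        (p.leadingCoeff * (∏ j ∈ Finset.univ.erase k2, (α k2 - α j))) < 0 := by
      have : p.leadingCoeff * (∏ j ∈ Finset.univ.erase k1, (α k1 - α j)) *
          (p.leadingCoeff * (∏ j ∈ Finset.univ.erase k2, (α k2 - α j))) =
          (p.leadingCoeff * p.leadingCoeff) *
            ((∏ j ∈ Finset.univ.erase k1, (α k1 - α j)) *
              (∏ j ∈ Finset.univ.erase k2, (α k2 - α j))) := by ring
      rw [this]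
      exact mul_neg_of_pos_of_neg (mul_pos hlp hlp) hPP
    nlinarith
  -- IVT: a root of q strictly between consecutive roots of p
  have hivt : ∀ k : Fin q.natDegree,
      ∃ b, α k.castSucc < b ∧ b < α k.succ ∧ q.eval b = 0 := by
    intro k
    have halt := hqalt k
    have hlt : α k.castSucc < α k.succ := hαs (Fin.castSucc_lt_succ (i := k))
    have hcont : ContinuousOn (fun x => q.eval x) (Set.Icc (α k.castSucc) (α k.succ)) :=
      (Polynomial.continuous q).continuousOn
    rcases mul_neg_iff.mp halt with ⟨hpos, hneg⟩ | ⟨hneg, hpos⟩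
    · have := intermediate_value_Ioo' hlt.le hcont
      have h0 : (0:ℝ) ∈ Set.Ioo (q.eval (α k.succ)) (q.eval (α k.castSucc)) := ⟨hneg, hpos⟩
      obtain ⟨b, hbmem, hb⟩ := this h0
      exact ⟨b, hbmem.1, hbmem.2, hb⟩
    · have := intermediate_value_Ioo hlt.le hcont
      have h0 : (0:ℝ) ∈ Set.Ioo (q.eval (α k.castSucc)) (q.eval (α k.succ)) := ⟨hneg, hpos⟩
      obtain ⟨b, hbmem, hb⟩ := this h0
      exact ⟨b, hbmem.1, hbmem.2, hb⟩
  choose β hβ1 hβ2 hβ3 using hivt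
  have hβs : StrictMono β := by
    intro i j hij
    calc β i < α i.succ := hβ2 i
      _ ≤ α j.castSucc := by
          apply hαs.monotone
          have hij' : (i : ℕ) < (j : ℕ) := hij
          rw [Fin.le_def, Fin.val_succ, Fin.coe_castSucc]
          omega
      _ < β j := hβ1 j
  have hqroots : q.roots = Finset.univ.val.map β := by
    have hle : Finset.univ.val.map β ≤ q.roots := by
      rw [Multiset.le_iff_count]
      intro b
      by_cases hbmem : b ∈ Finset.univ.val.map β
      · obtain ⟨k, _, rfl⟩ := Multiset.mem_map.mp hbmem
        have hcount1 : (Finset.univ.val.map β).count (β k) = 1 :=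
          Multiset.count_eq_one_of_mem
            (Multiset.Nodup.map hβs.injective Finset.univ.nodup) hbmem
        rw [hcount1]
        exact Multiset.one_le_count_iff_mem.mpr
          ((Polynomial.mem_roots hq0).mpr (hβ3 k))
      · rw [Multiset.count_eq_zero_of_notMem hbmem]
        exact Nat.zero_le _
    refine (Multiset.eq_of_le_of_card_le hle ?_).symm
    rw [Multiset.card_map]
    have := Polynomial.card_roots' q
    simpa using this
  exact ⟨hrr, hp, α, β, hαs.monotone, hβs.monotone, hproots, hqroots,
    fun i => ⟨hβ1 i, hβ2 i⟩⟩

end CoreForward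

lemma Finsupp.degree_cons {n : ℕ} (a : ℕ) (m : Fin n →₀ ℕ) :
    (Finsupp.cons a m).degree = a + m.degree := by
  have h : ∀ {k : ℕ} (d : Fin k →₀ ℕ), d.degree = ∑ i : Fin k, d i := by
    intro k d
    exact Finset.sum_subset (Finset.subset_univ _)
      (fun i _ hi => Finsupp.notMem_support_iff.mp hi)
  rw [h, h, Fin.sum_univ_succ]
  simp [Finsupp.cons_zero, Finsupp.cons_succ]

section Mv
variable {n : ℕ}

lemma stdE_eq_cons : (fun i : Fin (n+1) => if i = 0 then (1:ℝ) else 0)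
    = Fin.cons 1 (fun _ => 0) := by
  funext i
  refine Fin.cases ?_ ?_ i
  · simp
  · intro j; simp [Fin.succ_ne_zero]

lemma finSuccEquiv_coeff_high {d : ℕ} {f : MvPolynomial (Fin (n+1)) ℝ}
    (hf : f.IsHomogeneous d) {i : ℕ} (hi : d < i) :
    (MvPolynomial.finSuccEquiv ℝ n f).coeff i = 0 := by
  apply MvPolynomial.ext
  intro m
  rw [MvPolynomial.finSuccEquiv_coeff_coeff, MvPolynomial.coeff_zero]
  apply hf.coeff_eq_zero
  rw [Finsupp.degree_cons]
  omega

lemma finSuccEquiv_coeff_top {d : ℕ} {f : MvPolynomial (Fin (n+1)) ℝ}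
    (hf : f.IsHomogeneous d) :
    (MvPolynomial.finSuccEquiv ℝ n f).coeff d
      = MvPolynomial.C (MvPolynomial.coeff (Finsupp.cons d 0) f) := by
  apply MvPolynomial.ext
  intro m
  rw [MvPolynomial.finSuccEquiv_coeff_coeff, MvPolynomial.coeff_C]
  by_cases hm : m = 0
  · subst hm
    rw [if_pos rfl]
  · have hcoeff0 : MvPolynomial.coeff (Finsupp.cons d m) f = 0 := by
      apply hf.coeff_eq_zero
      rw [Finsupp.degree_cons]
      have hmd : m.degree ≠ 0 := fun h => hm ((Finsupp.degree_eq_zero_iff m).mp h)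
      omega
    rw [hcoeff0]
    split_ifs with hif
    · exact absurd (by simpa [eq_comm] using hif) hm
    · rfl

lemma map_eval_zero_finSuccEquiv {d : ℕ} {f : MvPolynomial (Fin (n+1)) ℝ}
    (hf : f.IsHomogeneous d) :
    Polynomial.map (MvPolynomial.eval (0 : Fin n → ℝ)) (MvPolynomial.finSuccEquiv ℝ n f)
      = Polynomial.C (MvPolynomial.coeff (Finsupp.cons d 0) f) * Polynomial.X ^ d := by
  apply Polynomial.ext
  intro i
  rw [Polynomial.coeff_map, Polynomial.coeff_C_mul, Polynomial.coeff_X_pow]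
  rcases lt_trichotomy i d with h | h | h
  · rw [if_neg (by omega), mul_zero]
    have : MvPolynomial.eval (0 : Fin n → ℝ) = MvPolynomial.constantCoeff :=
      MvPolynomial.eval_zero
    rw [this, MvPolynomial.constantCoeff_eq]
    have := MvPolynomial.finSuccEquiv_coeff_coeff (0 : Fin n →₀ ℕ) f i
    rw [this]
    apply hf.coeff_eq_zero
    rw [Finsupp.degree_cons, map_zero]
    omega
  · subst h
    rw [if_pos rfl, mul_one, finSuccEquiv_coeff_top hf]
    simp
  · rw [if_neg (by omega), mul_zero, finSuccEquiv_coeff_high hf h]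
    simp

lemma eval_stdE {d : ℕ} {f : MvPolynomial (Fin (n+1)) ℝ} (hf : f.IsHomogeneous d) :
    MvPolynomial.eval (fun i : Fin (n+1) => if i = 0 then (1:ℝ) else 0) f
      = MvPolynomial.coeff (Finsupp.cons d 0) f := by
  rw [stdE_eq_cons, MvPolynomial.eval_eq_eval_mv_eval' (fun _ => (0:ℝ)) 1 f]
  have h0 : (fun _ : Fin n => (0:ℝ)) = (0 : Fin n → ℝ) := rfl
  rw [h0, map_eval_zero_finSuccEquiv hf]
  simp

lemma natDegree_map_eval {d : ℕ} {f : MvPolynomial (Fin (n+1)) ℝ}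
    (hf : f.IsHomogeneous d)
    (hfe : MvPolynomial.eval (fun i : Fin (n+1) => if i = 0 then (1:ℝ) else 0) f ≠ 0)
    (x : Fin n → ℝ) :
    (Polynomial.map (MvPolynomial.eval x) (MvPolynomial.finSuccEquiv ℝ n f)).natDegree = d ∧
    (Polynomial.map (MvPolynomial.eval x) (MvPolynomial.finSuccEquiv ℝ n f)).leadingCoeff
      = MvPolynomial.eval (fun i : Fin (n+1) => if i = 0 then (1:ℝ) else 0) f := by
  set P := MvPolynomial.finSuccEquiv ℝ n f
  have hcoeffd : (Polynomial.map (MvPolynomial.eval x) P).coeff d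
      = MvPolynomial.eval (fun i : Fin (n+1) => if i = 0 then (1:ℝ) else 0) f := by
    rw [Polynomial.coeff_map, finSuccEquiv_coeff_top hf, MvPolynomial.eval_C, eval_stdE hf]
  have hdeg : (Polynomial.map (MvPolynomial.eval x) P).natDegree = d := by
    apply le_antisymm
    · apply Polynomial.natDegree_le_iff_coeff_eq_zero.mpr
      intro i hi
      rw [Polynomial.coeff_map, finSuccEquiv_coeff_high hf hi, map_zero]
    · exact Polynomial.le_natDegree_of_ne_zero (by rw [hcoeffd]; exact hfe)
  refine ⟨hdeg, ?_⟩
  rw [Polynomial.leadingCoeff, hdeg, hcoeffd]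

lemma lineRestrict_eq (f : MvPolynomial (Fin (n+1)) ℝ) (v : Fin (n+1) → ℝ) :
    lineRestrict f (fun i : Fin (n+1) => if i = 0 then (1:ℝ) else 0) v
      = (Polynomial.map (MvPolynomial.eval (v ∘ Fin.succ))
          (MvPolynomial.finSuccEquiv ℝ n f)).comp
            (Polynomial.X + Polynomial.C (v 0)) := by
  have hx : ∀ j : Fin (n+1), (MvPolynomial.aeval
      (fun i : Fin (n+1) => Polynomial.C (if i = 0 then (1:ℝ) else 0) * Polynomial.X
        + Polynomial.C (v i))) (MvPolynomial.X j : MvPolynomial (Fin (n+1)) ℝ)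
      = (Polynomial.map (MvPolynomial.eval (v ∘ Fin.succ))
          ((MvPolynomial.finSuccEquiv ℝ n) (MvPolynomial.X j))).comp
            (Polynomial.X + Polynomial.C (v 0)) := by
    intro j
    refine Fin.cases ?_ ?_ j
    · rw [MvPolynomial.aeval_X, MvPolynomial.finSuccEquiv_X_zero]
      simp
    · intro k
      rw [MvPolynomial.aeval_X, MvPolynomial.finSuccEquiv_X_succ]
      simp [Fin.succ_ne_zero]
  induction f using MvPolynomial.induction_on with
  | C a =>
    have hc : (MvPolynomial.finSuccEquiv ℝ n) (MvPolynomial.C a)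
        = Polynomial.C (MvPolynomial.C a) := by
      rw [MvPolynomial.finSuccEquiv_apply, MvPolynomial.eval₂Hom_C]
      rfl
    simp [lineRestrict, hc]
  | add f g hf hg =>
    simp only [lineRestrict] at hf hg ⊢
    rw [map_add, map_add, Polynomial.map_add, Polynomial.add_comp, hf, hg]
  | mul_X f j hf =>
    simp only [lineRestrict] at hf ⊢
    rw [map_mul, map_mul, Polynomial.map_mul, Polynomial.mul_comp, hf, hx j]

end Mv


lemma roots_comp_X_add_C (p : Polynomial ℝ) (c : ℝ) :
    (p.comp (Polynomial.X + Polynomial.C c)).roots = p.roots.map (fun t => t - c) := by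
  classical
  by_cases hp : p = 0
  · simp [hp]
  have hmult : ∀ a : ℝ, (p.comp (Polynomial.X + Polynomial.C c)).rootMultiplicity a
      = p.rootMultiplicity (a + c) := by
    intro a
    have hstep : (Polynomial.X + Polynomial.C c).comp (Polynomial.X + Polynomial.C a)
        = Polynomial.X + Polynomial.C (a + c) := by
      rw [Polynomial.add_comp, Polynomial.X_comp, Polynomial.C_comp, map_add]
      ring
    rw [Polynomial.rootMultiplicity_eq_rootMultiplicity, Polynomial.comp_assoc, hstep,
      ← Polynomial.rootMultiplicity_eq_rootMultiplicity]
  apply Multiset.ext.mpr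
  intro a
  rw [Polynomial.count_roots, hmult]
  have hinj : Function.Injective (fun t : ℝ => t - c) := fun x y h => by
    dsimp at h; linarith
  have hcount := Multiset.count_map_eq_count' (fun t : ℝ => t - c) p.roots hinj (a + c)
  simp only [add_sub_cancel_right] at hcount
  rw [← Polynomial.count_roots, ← hcount]

lemma natDegree_comp_X_add_C' (p : Polynomial ℝ) (c : ℝ) :
    (p.comp (Polynomial.X + Polynomial.C c)).natDegree = p.natDegree := by
  rw [Polynomial.natDegree_comp, Polynomial.natDegree_X_add_C, mul_one]

lemma realRooted_comp_X_add_C {p : Polynomial ℝ} (c : ℝ) (h : RealRooted p) :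
    RealRooted (p.comp (Polynomial.X + Polynomial.C c)) := by
  unfold RealRooted at *
  rw [roots_comp_X_add_C, Multiset.card_map, natDegree_comp_X_add_C', h]

lemma strictlyInterlaces_of_data {q p : Polynomial ℝ} {m : ℕ} (hm : q.natDegree = m)
    (hdeg : p.natDegree = m + 1) (α : Fin (m + 1) → ℝ) (β : Fin m → ℝ)
    (hαm : Monotone α) (hβm : Monotone β)
    (hproots : p.roots = Finset.univ.val.map α)
    (hqroots : q.roots = Finset.univ.val.map β)
    (hint : ∀ i : Fin m, α i.castSucc < β i ∧ β i < α i.succ) :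
    StrictlyInterlaces q p := by
  subst hm
  exact ⟨hdeg, α, β, hαm, hβm, hproots, hqroots, hint⟩

lemma strictlyInterlaces_comp_X_add_C {p q : Polynomial ℝ} (c : ℝ)
    (h : StrictlyInterlaces q p) :
    StrictlyInterlaces (q.comp (Polynomial.X + Polynomial.C c))
      (p.comp (Polynomial.X + Polynomial.C c)) := by
  obtain ⟨hdeg, α, β, hαm, hβm, hproots, hqroots, hint⟩ := h
  refine strictlyInterlaces_of_data (m := q.natDegree) (natDegree_comp_X_add_C' q c)
    (by rw [natDegree_comp_X_add_C', hdeg]) (fun i => α i - c) (fun i => β i - c)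
    (fun i j hij => sub_le_sub_right (hαm hij) c)
    (fun i j hij => sub_le_sub_right (hβm hij) c) ?_ ?_
    (fun i => ⟨sub_lt_sub_right (hint i).1 c, sub_lt_sub_right (hint i).2 c⟩)
  · rw [roots_comp_X_add_C, hproots, Multiset.map_map]; rfl
  · rw [roots_comp_X_add_C, hqroots, Multiset.map_map]; rfl

lemma realRooted_C_mul_pow (a c : ℝ) (ha : a ≠ 0) (d : ℕ) :
    RealRooted (Polynomial.C a * (Polynomial.X + Polynomial.C c) ^ d) := by
  unfold RealRooted
  have hx : (Polynomial.X + Polynomial.C c).roots = {-c} := by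
    rw [show Polynomial.X + Polynomial.C c = Polynomial.X - Polynomial.C (-c) by
      rw [map_neg, sub_neg_eq_add], Polynomial.roots_X_sub_C]
  rw [Polynomial.roots_C_mul _ ha, Polynomial.roots_pow, hx,
    Polynomial.natDegree_C_mul ha, Polynomial.natDegree_pow, Polynomial.natDegree_X_add_C,
    mul_one]
  simp

/-- Pointwise definiteness of the multivariate Bézout matrix.
For homogeneous `f, g` of degrees `d` and `d - 1` with `f(e) > 0 < g(e)` at
`e = (1,0,…,0)`, the Bézout matrix `B(f,g)` (entries in `ℝ[x₁,…,x_n]`) is positive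
definite at every `0 ≠ x ∈ ℝⁿ` iff `f` is hyperbolic w.r.t. `e` and `g` strictly
interlaces `f` w.r.t. `e`. -/
theorem stmt_10 (n d : ℕ) (hd : 1 ≤ d) (f g : MvPolynomial (Fin (n + 1)) ℝ)
    (e : Fin (n + 1) → ℝ) (he : e = fun i => if i = 0 then 1 else 0)
    (hfhom : f.IsHomogeneous d) (hghom : g.IsHomogeneous (d - 1))
    (hfe : 0 < MvPolynomial.eval e f) (hge : 0 < MvPolynomial.eval e g)
    (B : Matrix (Fin d) (Fin d) (MvPolynomial (Fin n) ℝ))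
    (hB : IsBezoutMat d (MvPolynomial.finSuccEquiv ℝ n f) (MvPolynomial.finSuccEquiv ℝ n g) B) :
    (∀ x : Fin n → ℝ, x ≠ 0 → (B.map (MvPolynomial.eval x)).PosDef) ↔
      (Hyperbolic f e ∧ StrictlyInterlacesWrt g f e) := by
  classical
  obtain ⟨m, rfl⟩ : ∃ m, d = m + 1 := ⟨d - 1, by omega⟩
  subst he
  have hg' : g.IsHomogeneous m := by simpa using hghom
  have hdp := fun x : Fin n → ℝ => natDegree_map_eval hfhom hfe.ne' x
  have hdq := fun x : Fin n → ℝ => natDegree_map_eval hg' hge.ne' x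
  have hBx : ∀ x : Fin n → ℝ, IsBezoutMat (m + 1)
      (Polynomial.map (MvPolynomial.eval x) (MvPolynomial.finSuccEquiv ℝ n f))
      (Polynomial.map (MvPolynomial.eval x) (MvPolynomial.finSuccEquiv ℝ n g))
      (B.map (MvPolynomial.eval x)) := fun x => hB.ringHomMap (MvPolynomial.eval x)
  have hlp : ∀ x : Fin n → ℝ,
      0 < (Polynomial.map (MvPolynomial.eval x) (MvPolynomial.finSuccEquiv ℝ n f)).leadingCoeff := by
    intro x; rw [(hdp x).2]; exact hfe
  have hlq : ∀ x : Fin n → ℝ,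
      0 < (Polynomial.map (MvPolynomial.eval x) (MvPolynomial.finSuccEquiv ℝ n g)).leadingCoeff := by
    intro x; rw [(hdq x).2]; exact hge
  constructor
  · intro hpd
    refine ⟨⟨hfe.ne', ?_⟩, ?_⟩
    · intro v
      rw [lineRestrict_eq f v]
      by_cases hx : (v ∘ Fin.succ) = 0
      · rw [hx, map_eval_zero_finSuccEquiv hfhom]
        have hcomp : (Polynomial.C (MvPolynomial.coeff (Finsupp.cons (m + 1) 0) f) *
            Polynomial.X ^ (m + 1)).comp (Polynomial.X + Polynomial.C (v 0))
            = Polynomial.C (MvPolynomial.coeff (Finsupp.cons (m + 1) 0) f) *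
              (Polynomial.X + Polynomial.C (v 0)) ^ (m + 1) := by
          simp [Polynomial.mul_comp, Polynomial.pow_comp]
        rw [hcomp]
        apply realRooted_C_mul_pow
        rw [← eval_stdE hfhom]
        exact hfe.ne'
      · apply realRooted_comp_X_add_C
        exact (core_forward (hdp _).1 (hdq _).1 (hlp _) (hlq _) (hBx _) (hpd _ hx)).1
    · intro v hv
      have hx : (v ∘ Fin.succ) ≠ 0 := by
        intro hc
        apply hv (v 0)
        funext i
        refine Fin.cases ?_ ?_ i
        · simp
        · intro j
          have h1 : v j.succ = 0 := congrFun hc j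
          simp [h1, Fin.succ_ne_zero]
      rw [lineRestrict_eq f v, lineRestrict_eq g v]
      apply strictlyInterlaces_comp_X_add_C
      exact (core_forward (hdp _).1 (hdq _).1 (hlp _) (hlq _) (hBx _) (hpd _ hx)).2
  · rintro ⟨hhyp, hsi⟩
    intro x hx
    have hv : ∀ c : ℝ, (Fin.cons 0 x : Fin (n + 1) → ℝ)
        ≠ c • (fun i : Fin (n + 1) => if i = 0 then (1:ℝ) else 0) := by
      intro c hc
      apply hx
      funext i
      have h1 := congrFun hc i.succ
      simpa [Fin.succ_ne_zero] using h1
    have hsix := hsi (Fin.cons 0 x) hv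
    rw [lineRestrict_eq f, lineRestrict_eq g] at hsix
    have htail : (Fin.cons (0:ℝ) x : Fin (n + 1) → ℝ) ∘ Fin.succ = x := by
      funext j; simp
    have hzero : (Fin.cons (0:ℝ) x : Fin (n + 1) → ℝ) 0 = 0 := rfl
    rw [htail, hzero, Polynomial.C_0, add_zero, Polynomial.comp_X, Polynomial.comp_X] at hsix
    exact core_backward (hdp x).1 (hdq x).1 (hlp x) (hlq x) (hBx x) hsix
end

section
/- Let q ∈ ℝ[x,y,z] be a nonzero square-free polynomial and let N be an n×n matrix with entries in ℝ[x,y,z] such that q divides every 2×2 minor of N. Then for every k with 2 ≤ k ≤ n, q^{k−1} divides every k×k minor of N; in particular q^{n−1} divides det(N). -/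
open MvPolynomial

/-- If a prime `p` divides every `2×2` minor of a `k×k` matrix `M`, then
`p^(k-1)` divides `det M`. -/
lemma prime_case {R : Type*} [CommRing R] [IsDomain R] (k : ℕ) (p : R) (hp : Prime p)
    (M : Matrix (Fin k) (Fin k) R)
    (h : ∀ i j a b, p ∣ (M i a * M j b - M i b * M j a)) :
    p ^ (k - 1) ∣ M.det := by
  by_cases hall : ∀ i j, p ∣ M i j
  · refine dvd_trans (pow_dvd_pow p (Nat.sub_le k 1)) ?_
    rw [Matrix.det_apply']
    refine Finset.dvd_sum fun σ _ => Dvd.dvd.mul_left ?_ _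
    have hk : p ^ k = ∏ _i : Fin k, p := by
      simp [Finset.prod_const]
    rw [hk]
    exact Finset.prod_dvd_prod_of_dvd _ _ fun i _ => hall _ _
  · push_neg at hall
    obtain ⟨i0, j0, hpiv⟩ := hall
    set c := M i0 j0 with hc
    set A : Matrix (Fin k) (Fin k) R := fun i l =>
      if i = i0 then (if l = i0 then (1 : R) else 0)
      else (if l = i then c else if l = i0 then -(M i j0) else 0) with hA
    have hdetA : A.det = c ^ (k - 1) := by
      rw [Matrix.det_apply]
      rw [Finset.sum_eq_single (1 : Equiv.Perm (Fin k))]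
      · have hAdiag : ∀ i, A i i = if i = i0 then 1 else c := by
          intro i
          by_cases hi : i = i0 <;> simp [hA, hi]
        simp only [Equiv.Perm.sign_one, one_smul, Equiv.Perm.one_apply]
        rw [← Finset.mul_prod_erase Finset.univ (fun i => A i i) (Finset.mem_univ i0)]
        rw [hAdiag i0, if_pos rfl, one_mul]
        rw [Finset.prod_congr rfl (fun x hx => by
          rw [hAdiag x, if_neg (Finset.ne_of_mem_erase hx)])]
        rw [Finset.prod_const, Finset.card_erase_of_mem (Finset.mem_univ i0)]
        simp
      · intro σ _ hσ
        have hzero : ∃ i, A (σ i) i = 0 := by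
          by_cases hfix : σ i0 = i0
          · have : ∃ j, σ j ≠ j := by
              by_contra hcon
              push_neg at hcon
              exact hσ (Equiv.ext hcon)
            obtain ⟨j, hj⟩ := this
            have hji0 : j ≠ i0 := fun e => hj (e ▸ hfix)
            refine ⟨j, ?_⟩
            have hrow : σ j ≠ i0 := by
              intro e
              exact hji0 (σ.injective (e.trans hfix.symm))
            show A (σ j) j = 0
            simp only [hA]
            rw [if_neg hrow, if_neg (fun e => hj e.symm), if_neg hji0]
          · refine ⟨σ⁻¹ i0, ?_⟩
            have h1 : σ (σ⁻¹ i0) = i0 := σ.apply_symm_apply i0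
            have h2 : σ⁻¹ i0 ≠ i0 := by
              intro e
              exact hfix (by rw [← e, h1]; exact e.symm)
            show A (σ (σ⁻¹ i0)) (σ⁻¹ i0) = 0
            rw [h1]
            simp only [hA]
            simp [h2]
            exact h2
        obtain ⟨i, hi⟩ := hzero
        exact smul_eq_zero_of_right _ (Finset.prod_eq_zero (Finset.mem_univ i) hi)
      · intro h1
        exact absurd (Finset.mem_univ _) h1
    have hAM : ∀ i j, i ≠ i0 → (A * M) i j = c * M i j + -(M i j0) * M i0 j := by
      intro i j hi
      rw [Matrix.mul_apply]
      have hterm : ∀ l, A i l * M l j =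
          (if l = i then c * M i j else 0) + (if l = i0 then -(M i j0) * M i0 j else 0) := by
        intro l
        by_cases h1 : l = i <;> by_cases h2 : l = i0
        · exact absurd (h1.symm.trans h2) hi
        · subst h1; simp [hA, hi, h2]
        · subst h2; simp [hA, hi, Ne.symm hi]
        · simp [hA, hi, h1, h2]
      rw [Finset.sum_congr rfl fun l _ => hterm l, Finset.sum_add_distrib]
      simp
    have hAM0 : ∀ j, (A * M) i0 j = M i0 j := by
      intro j
      rw [Matrix.mul_apply]
      have hterm : ∀ l, A i0 l * M l j = if l = i0 then M i0 j else 0 := by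
        intro l
        by_cases h1 : l = i0 <;> simp [hA, h1]
      rw [Finset.sum_congr rfl fun l _ => hterm l]
      simp
    have hdvdrow : ∀ i j, i ≠ i0 → p ∣ (A * M) i j := by
      intro i j hi
      rw [hAM i j hi]
      have := h i0 i j0 j
      have heq : c * M i j + -(M i j0) * M i0 j = M i0 j0 * M i j - M i0 j * M i j0 := by
        rw [hc]; ring
      rw [heq]
      exact this
    have hdvd : p ^ (k - 1) ∣ (A * M).det := by
      rw [Matrix.det_apply']
      refine Finset.dvd_sum fun σ _ => Dvd.dvd.mul_left ?_ _
      rw [← Finset.mul_prod_erase Finset.univ (fun i => (A * M) (σ i) i)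
        (Finset.mem_univ (σ⁻¹ i0))]
      refine Dvd.dvd.mul_left ?_ _
      have hcard : (Finset.univ.erase (σ⁻¹ i0)).card = k - 1 := by
        rw [Finset.card_erase_of_mem (Finset.mem_univ _)]
        simp
      have hk : p ^ (k - 1) = ∏ _i ∈ Finset.univ.erase (σ⁻¹ i0), p := by
        rw [Finset.prod_const, hcard]
      rw [hk]
      refine Finset.prod_dvd_prod_of_dvd _ _ fun i hi => ?_
      refine hdvdrow _ _ ?_
      intro e
      exact (Finset.ne_of_mem_erase hi) (by rw [← e]; exact (σ.symm_apply_apply i).symm)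
    rw [Matrix.det_mul, hdetA] at hdvd
    refine hp.pow_dvd_of_dvd_mul_left _ ?_ hdvd
    intro hd
    exact hpiv (hp.dvd_of_dvd_pow hd)

/-- Key lemma: if squarefree `q` divides every `2×2` minor of `M`, then `q^(k-1) ∣ det M`. -/
lemma key_lemma {R : Type*} [CommRing R] [IsDomain R] [UniqueFactorizationMonoid R]
    (k : ℕ) (M : Matrix (Fin k) (Fin k) R) (q : R) (hq : Squarefree q)
    (h : ∀ i j a b, q ∣ (M i a * M j b - M i b * M j a)) : q ^ (k - 1) ∣ M.det := by
  induction q using WfDvdMonoid.induction_on_irreducible with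
  | zero => exact absurd hq not_squarefree_zero
  | unit u hu => exact (hu.pow _).dvd
  | mul a i ha hi IH =>
    have hprime : Prime i := UniqueFactorizationMonoid.irreducible_iff_prime.mp hi
    have hsa : Squarefree a := hq.of_mul_right
    have hia : ¬ i ∣ a := by
      intro hd
      obtain ⟨t, rfl⟩ := hd
      exact hi.not_isUnit (hq i (by ring_nf; exact ⟨t, by ring⟩))
    have hdA : a ^ (k - 1) ∣ M.det :=
      IH hsa fun i' j' a' b' => (dvd_mul_left a i).trans (h i' j' a' b')
    have hdI : i ^ (k - 1) ∣ M.det :=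
      prime_case k i hprime M fun i' j' a' b' => (dvd_mul_right i a).trans (h i' j' a' b')
    obtain ⟨t, ht⟩ := hdA
    have : i ^ (k - 1) ∣ t := by
      refine hprime.pow_dvd_of_dvd_mul_left _ ?_ (ht ▸ hdI)
      intro hd
      exact hia (hprime.dvd_of_dvd_pow hd)
    obtain ⟨s, hs⟩ := this
    exact ⟨s, by rw [ht, hs, mul_pow]; ring⟩

/-- Divisibility of higher minors.
Let `q ∈ ℝ[x,y,z]` be nonzero and square-free and let `N` be an `n × n` matrix of
polynomials such that `q` divides every `2 × 2` minor of `N`.  Then `q^(k-1)` divides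
every `k × k` minor of `N` for `2 ≤ k ≤ n`; in particular `q^(n-1)` divides `det N`. -/
theorem stmt_12 (n : ℕ) (q : MvPolynomial (Fin 3) ℝ) (hq0 : q ≠ 0) (hqsf : Squarefree q)
    (N : Matrix (Fin n) (Fin n) (MvPolynomial (Fin 3) ℝ))
    (h2 : ∀ i j k l : Fin n, q ∣ (N i k * N j l - N i l * N j k)) :
    (∀ k : ℕ, 2 ≤ k → k ≤ n → ∀ (r c : Fin k → Fin n),
      Function.Injective r → Function.Injective c →
      q ^ (k - 1) ∣ (N.submatrix r c).det) ∧
    q ^ (n - 1) ∣ N.det := by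
  constructor
  · intro k _ _ r c _ _
    exact key_lemma k (N.submatrix r c) q hqsf fun i j a b => h2 (r i) (r j) (c a) (c b)
  · exact key_lemma n N q hqsf fun i j a b => h2 i j a b
end

section
/- Let f = y²z − x³ + 6xz² + 3z³ ∈ ℝ[x,y,z] (the homogenization of y² = x³ − 6x − 3, a hyperbolic cubic). Then there do not exist symmetric 3×3 matrices A, B, C with rational entries and a nonzero real constant c such that det(xA + yB + zC) = c·f and e₁A + e₂B + e₃C is positive definite for some point (e₁,e₂,e₃) ∈ ℝ³. -/
open MvPolynomial Polynomial

/-- The hyperbolic cubic `y²z - x³ + 6xz² + 3z³` (homogenization of `y² = x³ - 6x - 3`). -/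
noncomputable def cubicF : MvPolynomial (Fin 3) ℝ :=
  (MvPolynomial.X 1) ^ 2 * MvPolynomial.X 2 - (MvPolynomial.X 0) ^ 3 +
    6 * MvPolynomial.X 0 * (MvPolynomial.X 2) ^ 2 + 3 * (MvPolynomial.X 2) ^ 3

private lemma no_rat_root (r : ℚ) : r^3 - 6*r - 3 ≠ 0 := by
  intro h
  have hd : ((r.den : ℤ) : ℚ) ≠ 0 := by
    exact_mod_cast (Nat.cast_ne_zero (R := ℚ)).mpr r.den_nz
  have hr : (r.num : ℚ) = r * (r.den : ℤ) := by
    push_cast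
    rw [mul_comm]
    exact_mod_cast (Rat.den_mul_eq_num r).symm
  have hnum : r.num ^ 3 = 6 * r.num * (r.den : ℤ)^2 + 3 * (r.den : ℤ)^3 := by
    have : ((r.num ^ 3 : ℤ) : ℚ) = ((6 * r.num * (r.den : ℤ)^2 + 3 * (r.den : ℤ)^3 : ℤ) : ℚ) := by
      push_cast
      rw [hr]
      push_cast
      linear_combination ((r.den : ℚ))^3 * h
    exact_mod_cast this
  have h3n : (3 : ℤ) ∣ r.num := by
    refine Int.Prime.dvd_pow' (by norm_num) (k := 3) ?_
    exact ⟨2 * r.num * (r.den : ℤ)^2 + (r.den : ℤ)^3, by linear_combination hnum⟩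
  obtain ⟨m, hm⟩ := h3n
  have h3d : (3 : ℤ) ∣ (r.den : ℤ) := by
    refine Int.Prime.dvd_pow' (by norm_num) (k := 3) ?_
    refine ⟨3 * m^3 - 2 * m * (r.den : ℤ)^2, ?_⟩
    have h27 := hnum
    rw [hm] at h27
    have h3 : (3:ℤ) * ((r.den : ℤ)^3) = 3 * (3 * (3 * m^3 - 2 * m * (r.den : ℤ)^2)) := by
      linear_combination -h27
    exact mul_left_cancel₀ (by norm_num) h3
  have h3d' : (3 : ℕ) ∣ r.den := by exact_mod_cast h3d
  have h3n' : (3 : ℕ) ∣ r.num.natAbs := by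
    have := Int.natAbs_dvd_natAbs.mpr (hm ▸ (Dvd.intro m rfl) : (3:ℤ) ∣ r.num)
    simpa using this
  have := Nat.dvd_gcd h3n' h3d'
  rw [r.reduced] at this
  omega


set_option maxHeartbeats 4000000 in
set_option maxRecDepth 100000 in
private lemma key2 (a1 a2 a3 p1 p2 al c1 c2 c3 r1 r2 ga b1 b2 b3 c : ℚ) (hc : c ≠ 0)
    (H : ∀ x y z : ℚ,
      (a1*x + b1*y + c1*z) * (a3*x + b3*y + c3*z) * (al*x + ga*z)
        - (a1*x + b1*y + c1*z) * (p2*x + r2*z) * (p2*x + r2*z)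
        - (a2*x + b2*y + c2*z) * (a2*x + b2*y + c2*z) * (al*x + ga*z)
        + (a2*x + b2*y + c2*z) * (p2*x + r2*z) * (p1*x + r1*z)
        + (p1*x + r1*z) * (a2*x + b2*y + c2*z) * (p2*x + r2*z)
        - (p1*x + r1*z) * (a3*x + b3*y + c3*z) * (p1*x + r1*z)
      = c * (y^2*z - x^3 + 6*x*z^2 + 3*z^3)) : False := by
  have h1 := H 1 0 0
  have h2 := H 0 1 0
  have h3 := H 0 0 1
  have h4 := H 1 1 0
  have h5 := H 1 (-1) 0
  have h6 := H 1 0 1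
  have h7 := H 1 0 (-1)
  have h8 := H 0 1 1
  have h9 := H 0 1 (-1)
  have h10 := H 1 1 1
  have hy2z : ga*(b1*b3 - b2^2) - c = 0 := by linear_combination (-1 : ℚ)*h3 + h8/2 - h9/2
  have hxy2 : al*(b1*b3 - b2^2) = 0 := by linear_combination (-1 : ℚ)*h1 + h4/2 + h5/2
  have hd2 : b1*b3 - b2^2 ≠ 0 := fun hh => hc (by linear_combination ga*hh - hy2z)
  have hal : al = 0 := by
    rcases mul_eq_zero.mp hxy2 with hh | hh
    · exact hh
    · exact absurd hh hd2
  have hga : ga ≠ 0 := fun hh => hc (by linear_combination (b1*b3 - b2^2)*hh - hy2z)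
  have g1 : (b1*p2^2 - 2*b2*p1*p2 + b3*p1^2) = 0 := by
    linear_combination h2 - h4/2 + h5/2 + (b1*a3 - 2*b2*a2 + b3*a1)*hal
  have g2 : ga*(b1*a3 - 2*b2*a2 + b3*a1) - 2*(b1*p2*r2 - b2*(p2*r1 + p1*r2) + b3*p1*r1) = 0 := by
    linear_combination h1 + h2 + h3 - h4 - h6 - h8 + h10 - (b1*c3 - 2*b2*c2 + b3*c1)*hal
  have g3 : ga*(b1*c3 - 2*b2*c2 + b3*c1) - (b1*r2^2 - 2*b2*r1*r2 + b3*r1^2) = 0 := by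
    linear_combination (-1 : ℚ)*h2 + h8/2 + h9/2
  have g5 : (a1*p2^2 - 2*a2*p1*p2 + a3*p1^2) - c = 0 := by
    linear_combination -h1 + (a1*a3 - a2^2)*hal
  have hp12 : ¬(p1 = 0 ∧ p2 = 0) := by
    rintro ⟨e1, e2⟩
    exact hc (by linear_combination -g5 + (a1*p2)*e2 + (a3*p1 - 2*a2*p2)*e1)
  have hce : c*(p1*r2 - p2*r1)^2 + ga*(b1*p2*r2 - b2*(p2*r1 + p1*r2) + b3*p1*r1)^2 = 0 := by
    linear_combination (-((p1*r2 - p2*r1)^2))*hy2z + (ga*(b1*r2^2 - 2*b2*r1*r2 + b3*r1^2))*g1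
  set Z : ℚ := c^2 with hZ
  set X : ℚ := -(c*(c1*p2^2 - 2*c2*p1*p2 + c3*p1^2)) - (b1*p2*r2 - b2*(p2*r1 + p1*r2) + b3*p1*r1)^2 with hX
  clear_value X Z
  have hK : ((a1*X + c1*Z)*(ga*p2) + (a2*X + c2*Z)*(-(ga*p1)) + (p1*X + r1*Z)*(p1*r2 - p2*r1) = 0) ∧ ((a2*X + c2*Z)*(ga*p2) + (a3*X + c3*Z)*(-(ga*p1)) + (p2*X + r2*Z)*(p1*r2 - p2*r1) = 0) ∧ ((p1*X + r1*Z)*(ga*p2) + (p2*X + r2*Z)*(-(ga*p1)) + (al*X + ga*Z)*(p1*r2 - p2*r1) = 0) := by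
    have hK3 : (p1*X + r1*Z)*(ga*p2) + (p2*X + r2*Z)*(-(ga*p1)) + (al*X + ga*Z)*(p1*r2 - p2*r1) = 0 := by linear_combination (X*(p1*r2 - p2*r1))*hal
    by_cases hE : (p1*r2 - p2*r1) = 0
    · -- degenerate case: e = 0
      have hgb : ga*(b1*p2*r2 - b2*(p2*r1 + p1*r2) + b3*p1*r1)^2 = 0 := by linear_combination hce - (c*(p1*r2 - p2*r1))*hE
      have hb0 : (b1*p2*r2 - b2*(p2*r1 + p1*r2) + b3*p1*r1) = 0 := by
        have hq := (mul_eq_zero.mp hgb).resolve_left hga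
        exact pow_eq_zero_iff (two_ne_zero) |>.mp hq
      have hrho0 : (b1*r2^2 - 2*b2*r1*r2 + b3*r1^2) = 0 := by
        by_cases hp1 : p1 = 0
        · have hp2 : p2 ≠ 0 := fun h2 => hp12 ⟨hp1, h2⟩
          have hq : p2^2*(b1*r2^2 - 2*b2*r1*r2 + b3*r1^2) = 0 := by
            linear_combination r2^2*g1 + (2*b2*p2*r2 - b3*(p1*r2 + p2*r1))*hE
          exact (mul_eq_zero.mp hq).resolve_left (pow_ne_zero 2 hp2)
        · have hq : p1^2*(b1*r2^2 - 2*b2*r1*r2 + b3*r1^2) = 0 := by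
            linear_combination r1^2*g1 + (b1*(p1*r2 + p2*r1) - 2*b2*p1*r1)*hE
          exact (mul_eq_zero.mp hq).resolve_left (pow_ne_zero 2 hp1)
      have hmx : (b1*a3 - 2*b2*a2 + b3*a1) = 0 := by
        have hq : ga*(b1*a3 - 2*b2*a2 + b3*a1) = 0 := by linear_combination g2 + 2*hb0
        exact (mul_eq_zero.mp hq).resolve_left hga
      have hmz : (b1*c3 - 2*b2*c2 + b3*c1) = 0 := by
        have hq : ga*(b1*c3 - 2*b2*c2 + b3*c1) = 0 := by linear_combination g3 + hrho0
        exact (mul_eq_zero.mp hq).resolve_left hga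
      have hSM : (a1*X + c1*Z)*p2^2 - 2*(a2*X + c2*Z)*p1*p2 + (a3*X + c3*Z)*p1^2 = 0 := by
        linear_combination X*g5 + (c1*p2^2 - 2*c2*p1*p2 + c3*p1^2)*hZ + c*hX - (c*(b1*p2*r2 - b2*(p2*r1 + p1*r2) + b3*p1*r1))*hb0
      have hMIX : b1*(a3*X + c3*Z) + b3*(a1*X + c1*Z) - 2*b2*(a2*X + c2*Z) = 0 := by linear_combination X*hmx + Z*hmz
      have hW : (((a1*X + c1*Z)*p2 - (a2*X + c2*Z)*p1) = 0) ∧ (((a2*X + c2*Z)*p2 - (a3*X + c3*Z)*p1) = 0) := by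
        by_cases hp1 : p1 = 0
        · have hp2 : p2 ≠ 0 := fun h2 => hp12 ⟨hp1, h2⟩
          have hm11 : a1*X + c1*Z = 0 := by
            have hq : (a1*X + c1*Z)*p2^2 = 0 := by
              linear_combination hSM + (2*(a2*X + c2*Z)*p2 - (a3*X + c3*Z)*p1)*hp1
            exact (mul_eq_zero.mp hq).resolve_right (pow_ne_zero 2 hp2)
          have hb1 : b1 = 0 := by
            have hq : b1*p2^2 = 0 := by linear_combination g1 + (2*b2*p2 - b3*p1)*hp1
            exact (mul_eq_zero.mp hq).resolve_right (pow_ne_zero 2 hp2)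
          have hb2 : b2 ≠ 0 := fun hh => hd2 (by linear_combination b3*hb1 - b2*hh)
          have hm12 : a2*X + c2*Z = 0 := by
            have hq : (-2*b2)*(a2*X + c2*Z) = 0 := by
              linear_combination hMIX - (a3*X + c3*Z)*hb1 - b3*hm11
            rcases mul_eq_zero.mp hq with hh | hh
            · exact absurd (by linarith : b2 = 0) hb2
            · exact hh
          constructor
          · linear_combination p2*hm11 - (a2*X + c2*Z)*hp1
          · linear_combination p2*hm12 - (a3*X + c3*Z)*hp1
        · by_cases hq1 : b1*p2 - b2*p1 = 0
          · exfalso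
            have hbc : b3*p1 - b2*p2 = 0 := by
              have hq : p1*(b3*p1 - b2*p2) = 0 := by linear_combination g1 - p2*hq1
              exact (mul_eq_zero.mp hq).resolve_left hp1
            apply hd2
            have hq : p1^2*(b1*b3 - b2^2) = 0 := by
              linear_combination (b2*p1)*hq1 + (b1*p1)*hbc
            exact (mul_eq_zero.mp hq).resolve_left (pow_ne_zero 2 hp1)
          · have hW1z : ((a1*X + c1*Z)*p2 - (a2*X + c2*Z)*p1) = 0 := by
              have hq : (b1*p2 - b2*p1)*((a1*X + c1*Z)*p2 - (a2*X + c2*Z)*p1) = 0 := by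
                linear_combination (-(p1^2)/2)*hMIX + (b1/2)*hSM + ((a1*X + c1*Z)/2)*g1
              exact (mul_eq_zero.mp hq).resolve_left hq1
            have hW2z : ((a2*X + c2*Z)*p2 - (a3*X + c3*Z)*p1) = 0 := by
              have hq : p1*((a2*X + c2*Z)*p2 - (a3*X + c3*Z)*p1) = 0 := by linear_combination p2*hW1z - hSM
              exact (mul_eq_zero.mp hq).resolve_left hp1
            exact ⟨hW1z, hW2z⟩
      refine ⟨?_, ?_, hK3⟩
      · linear_combination ga*hW.1 + (p1*X + r1*Z)*hE
      · linear_combination ga*hW.2 + (p2*X + r2*Z)*hE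
    · -- main case: e ≠ 0
      have hE2 : (p1*r2 - p2*r1)^2 ≠ 0 := pow_ne_zero 2 hE
      have hb0 : (b1*p2*r2 - b2*(p2*r1 + p1*r2) + b3*p1*r1) ≠ 0 := by
        intro hh
        apply hE
        have hq : c*(p1*r2 - p2*r1)^2 = 0 := by linear_combination hce - (ga*(b1*p2*r2 - b2*(p2*r1 + p1*r2) + b3*p1*r1))*hh
        have hq2 := (mul_eq_zero.mp hq).resolve_left hc
        exact pow_eq_zero_iff (two_ne_zero) |>.mp hq2
      have h7' : 2*(b1*p2*r2 - b2*(p2*r1 + p1*r2) + b3*p1*r1)^3 + c^2*(b1*r2^2 - 2*b2*r1*r2 + b3*r1^2) - 2*c*(b1*p2*r2 - b2*(p2*r1 + p1*r2) + b3*p1*r1)*(a1*p2*r2 - a2*(p2*r1 + p1*r2) + a3*p1*r1) = 0 := by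
        have hq : (p1*r2 - p2*r1)^2*(2*(b1*p2*r2 - b2*(p2*r1 + p1*r2) + b3*p1*r1)^3 + c^2*(b1*r2^2 - 2*b2*r1*r2 + b3*r1^2) - 2*c*(b1*p2*r2 - b2*(p2*r1 + p1*r2) + b3*p1*r1)*(a1*p2*r2 - a2*(p2*r1 + p1*r2) + a3*p1*r1)) = 0 := by
          linear_combination (-(c*(p1*r2 - p2*r1)^2*(a1*r2^2 - 2*a2*r1*r2 + a3*r1^2)))*g1 + (-(c*(p1*r2 - p2*r1)^2*(b1*r2^2 - 2*b2*r1*r2 + b3*r1^2)))*g5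
            + ((b1*p2^2 - 2*b2*p1*p2 + b3*p1^2)*(a1*r2^2 - 2*a2*r1*r2 + a3*r1^2) + (a1*p2^2 - 2*a2*p1*p2 + a3*p1^2)*(b1*r2^2 - 2*b2*r1*r2 + b3*r1^2) - 2*(b1*p2*r2 - b2*(p2*r1 + p1*r2) + b3*p1*r1)*(a1*p2*r2 - a2*(p2*r1 + p1*r2) + a3*p1*r1))*hce + (-((b1*p2*r2 - b2*(p2*r1 + p1*r2) + b3*p1*r1)^2*(p1*r2 - p2*r1)^2))*g2
        exact (mul_eq_zero.mp hq).resolve_left hE2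
      have h9' : (b1*r2^2 - 2*b2*r1*r2 + b3*r1^2)*((b1*p2*r2 - b2*(p2*r1 + p1*r2) + b3*p1*r1)^2 + c*(c1*p2^2 - 2*c2*p1*p2 + c3*p1^2)) - 2*c*(b1*p2*r2 - b2*(p2*r1 + p1*r2) + b3*p1*r1)*(c1*p2*r2 - c2*(p2*r1 + p1*r2) + c3*p1*r1) = 0 := by
        have hq : (p1*r2 - p2*r1)^2*((b1*r2^2 - 2*b2*r1*r2 + b3*r1^2)*((b1*p2*r2 - b2*(p2*r1 + p1*r2) + b3*p1*r1)^2 + c*(c1*p2^2 - 2*c2*p1*p2 + c3*p1^2)) - 2*c*(b1*p2*r2 - b2*(p2*r1 + p1*r2) + b3*p1*r1)*(c1*p2*r2 - c2*(p2*r1 + p1*r2) + c3*p1*r1)) = 0 := by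
          linear_combination (-(c*(p1*r2 - p2*r1)^2*(c1*r2^2 - 2*c2*r1*r2 + c3*r1^2)))*g1
            + ((b1*p2^2 - 2*b2*p1*p2 + b3*p1^2)*(c1*r2^2 - 2*c2*r1*r2 + c3*r1^2) + (c1*p2^2 - 2*c2*p1*p2 + c3*p1^2)*(b1*r2^2 - 2*b2*r1*r2 + b3*r1^2) - 2*(b1*p2*r2 - b2*(p2*r1 + p1*r2) + b3*p1*r1)*(c1*p2*r2 - c2*(p2*r1 + p1*r2) + c3*p1*r1))*hce + (-((b1*p2*r2 - b2*(p2*r1 + p1*r2) + b3*p1*r1)^2*(p1*r2 - p2*r1)^2))*g3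
        exact (mul_eq_zero.mp hq).resolve_left hE2
      have h9a : (b1*r2^2 - 2*b2*r1*r2 + b3*r1^2)*X + 2*c*(b1*p2*r2 - b2*(p2*r1 + p1*r2) + b3*p1*r1)*(c1*p2*r2 - c2*(p2*r1 + p1*r2) + c3*p1*r1) = 0 := by
        linear_combination -h9' + (b1*r2^2 - 2*b2*r1*r2 + b3*r1^2)*hX
      have h11 : X*((b1*p2*r2 - b2*(p2*r1 + p1*r2) + b3*p1*r1)^2 - c*(a1*p2*r2 - a2*(p2*r1 + p1*r2) + a3*p1*r1)) - c^3*(c1*p2*r2 - c2*(p2*r1 + p1*r2) + c3*p1*r1) = 0 := by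
        have hq : (2*(b1*p2*r2 - b2*(p2*r1 + p1*r2) + b3*p1*r1))*(X*((b1*p2*r2 - b2*(p2*r1 + p1*r2) + b3*p1*r1)^2 - c*(a1*p2*r2 - a2*(p2*r1 + p1*r2) + a3*p1*r1)) - c^3*(c1*p2*r2 - c2*(p2*r1 + p1*r2) + c3*p1*r1)) = 0 := by
          linear_combination X*h7' - c^2*h9a
        rcases mul_eq_zero.mp hq with hh | hh
        · exact absurd (by linarith : (b1*p2*r2 - b2*(p2*r1 + p1*r2) + b3*p1*r1) = 0) hb0
        · exact hh
      have hPK1 : ga*((a1*p2^2 - 2*a2*p1*p2 + a3*p1^2)*X + (c1*p2^2 - 2*c2*p1*p2 + c3*p1^2)*Z) - (p1*r2 - p2*r1)^2*Z = 0 := by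
        linear_combination (ga*X)*g5 + (ga*(c1*p2^2 - 2*c2*p1*p2 + c3*p1^2) - (p1*r2 - p2*r1)^2)*hZ + (ga*c)*hX - c*hce
      have hPK2 : ga*((a1*p2*r2 - a2*(p2*r1 + p1*r2) + a3*p1*r1)*X + (c1*p2*r2 - c2*(p2*r1 + p1*r2) + c3*p1*r1)*Z) + (p1*r2 - p2*r1)^2*X = 0 := by
        have hq : c*(ga*((a1*p2*r2 - a2*(p2*r1 + p1*r2) + a3*p1*r1)*X + (c1*p2*r2 - c2*(p2*r1 + p1*r2) + c3*p1*r1)*Z) + (p1*r2 - p2*r1)^2*X) = 0 := by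
          linear_combination X*hce - ga*h11 + (c*ga*(c1*p2*r2 - c2*(p2*r1 + p1*r2) + c3*p1*r1))*hZ
        exact (mul_eq_zero.mp hq).resolve_left hc
      refine ⟨?_, ?_, hK3⟩
      · have hq : (p1*r2 - p2*r1)*((a1*X + c1*Z)*(ga*p2) + (a2*X + c2*Z)*(-(ga*p1)) + (p1*X + r1*Z)*(p1*r2 - p2*r1)) = 0 := by linear_combination (-r1)*hPK1 + p1*hPK2
        exact (mul_eq_zero.mp hq).resolve_left hE
      · have hq : (p1*r2 - p2*r1)*((a2*X + c2*Z)*(ga*p2) + (a3*X + c3*Z)*(-(ga*p1)) + (p2*X + r2*Z)*(p1*r2 - p2*r1)) = 0 := by linear_combination (-r2)*hPK1 + p2*hPK2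
        exact (mul_eq_zero.mp hq).resolve_left hE
  obtain ⟨hK1, hK2, hK3⟩ := hK
  have hfin := H X 0 Z
  have hcube : c * ((0:ℚ)^2*Z - X^3 + 6*X*Z^2 + 3*Z^3) = 0 := by
    by_cases hp2 : p2 = 0
    · have hp1 : p1 ≠ 0 := fun hh => hp12 ⟨hh, hp2⟩
      have hq : (c * ((0:ℚ)^2*Z - X^3 + 6*X*Z^2 + 3*Z^3)) * (-(ga*p1)) = 0 := by
        linear_combination (ga*p1)*hfin + ((p1*X + r1*Z)*(p2*X + r2*Z) - (a2*X + c2*Z)*(al*X + ga*Z))*hK1 + ((a1*X + c1*Z)*(al*X + ga*Z) - (p1*X + r1*Z)*(p1*X + r1*Z))*hK2 + ((a2*X + c2*Z)*(p1*X + r1*Z) - (a1*X + c1*Z)*(p2*X + r2*Z))*hK3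
      rcases mul_eq_zero.mp hq with hh | hh
      · exact hh
      · have hgp : ga*p1 = 0 := by linarith
        rcases mul_eq_zero.mp hgp with h' | h'
        · exact absurd h' hga
        · exact absurd h' hp1
    · have hq : (c * ((0:ℚ)^2*Z - X^3 + 6*X*Z^2 + 3*Z^3)) * (ga*p2) = 0 := by
        linear_combination (-(ga*p2))*hfin + ((a3*X + c3*Z)*(al*X + ga*Z) - (p2*X + r2*Z)*(p2*X + r2*Z))*hK1 + ((p1*X + r1*Z)*(p2*X + r2*Z) - (a2*X + c2*Z)*(al*X + ga*Z))*hK2 + ((a2*X + c2*Z)*(p2*X + r2*Z) - (a3*X + c3*Z)*(p1*X + r1*Z))*hK3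
      rcases mul_eq_zero.mp hq with hh | hh
      · exact hh
      · rcases mul_eq_zero.mp hh with h' | h'
        · exact absurd h' hga
        · exact absurd h' hp2
  have hcube' := (mul_eq_zero.mp hcube).resolve_left hc
  have hZ0 : Z ≠ 0 := by rw [hZ]; exact pow_ne_zero 2 hc
  apply no_rat_root (X/Z)
  have hc3 : X^3 - 6*X*Z^2 - 3*Z^3 = 0 := by linear_combination -hcube'
  field_simp
  linear_combination hc3

set_option maxHeartbeats 1000000 in
/-- No rational definite `3×3` determinantal representation.
There are no rational symmetric `3×3` matrices `A, B, C` and nonzero `c ∈ ℝ` with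
`det(xA + yB + zC) = c · (y²z - x³ + 6xz² + 3z³)` such that the pencil is positive
definite at some point of `ℝ³`. -/
theorem stmt_14 :
    ¬ ∃ (A B C : Matrix (Fin 3) (Fin 3) ℚ),
      A.IsSymm ∧ B.IsSymm ∧ C.IsSymm ∧
      ∃ c : ℝ, c ≠ 0 ∧
        (pencilPoly (A.map fun q => (q : ℝ)) (B.map fun q => (q : ℝ))
            (C.map fun q => (q : ℝ))).det = MvPolynomial.C c * cubicF ∧
        ∃ e : Fin 3 → ℝ,
          (pencilEval (A.map fun q => (q : ℝ)) (B.map fun q => (q : ℝ))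
            (C.map fun q => (q : ℝ)) e).PosDef := by
  rintro ⟨A, B, C, hA, hB, hC, c, hc, hdet, e, hpd⟩
  clear hpd
  -- Step 1: scalar identity over ℝ at rational points
  have hev : ∀ x y z : ℚ, ((x • A + y • B + z • C).det : ℝ)
      = c * ((y:ℝ)^2*(z:ℝ) - (x:ℝ)^3 + 6*(x:ℝ)*(z:ℝ)^2 + 3*(z:ℝ)^3) := by
    intro x y z
    have h1 := congrArg (MvPolynomial.eval (![(x:ℝ), (y:ℝ), (z:ℝ)])) hdet
    rw [RingHom.map_det, RingHom.mapMatrix_apply] at h1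
    have hmat : (pencilPoly (A.map fun q => (q : ℝ)) (B.map fun q => (q : ℝ))
          (C.map fun q => (q : ℝ))).map (MvPolynomial.eval (![(x:ℝ), (y:ℝ), (z:ℝ)]))
        = (x • A + y • B + z • C).map (fun q : ℚ => (q:ℝ)) := by
      ext i j
      simp [pencilPoly, Matrix.map_apply, Matrix.add_apply, Matrix.smul_apply, smul_eq_mul]
      push_cast
      ring
    rw [hmat] at h1
    have hdet2 : ((x • A + y • B + z • C).map (fun q : ℚ => (q:ℝ))).det
        = ((x • A + y • B + z • C).det : ℝ) := ((Rat.castHom ℝ).map_det _).symm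
    rw [hdet2] at h1
    rw [h1]
    simp [cubicF]
  -- Step 2: c is (the cast of) a rational number
  have hAc : ((A.det : ℚ) : ℝ) = -c := by
    have h := hev 1 0 0
    simp only [one_smul, zero_smul, add_zero] at h
    push_cast at h
    push_cast; linarith
  have hcc : c = ((-A.det : ℚ) : ℝ) := by push_cast at hAc ⊢; linarith
  have hc0 : (-A.det : ℚ) ≠ 0 := by
    intro h
    apply hc
    rw [hcc, h]
    norm_num
  -- Step 3: rational scalar identity
  have hq : ∀ x y z : ℚ, (x • A + y • B + z • C).det
      = (-A.det) * (y^2*z - x^3 + 6*x*z^2 + 3*z^3) := by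
    intro x y z
    have h := hev x y z
    rw [hcc] at h
    exact_mod_cast h
  -- Step 4: B is singular; kernel vector
  have hdetB : B.det = 0 := by
    have h := hq 0 1 0
    simpa using h
  obtain ⟨u, hu0, huB⟩ := Matrix.exists_mulVec_eq_zero_iff.mpr hdetB
  -- Step 5: completion of u to a basis
  obtain ⟨S, hSdet, hScol⟩ : ∃ S : Matrix (Fin 3) (Fin 3) ℚ, S.det ≠ 0 ∧ ∀ i, S i 2 = u i := by
    have hune : u 0 ≠ 0 ∨ u 1 ≠ 0 ∨ u 2 ≠ 0 := by
      by_contra hcon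
      push_neg at hcon
      apply hu0
      funext i
      fin_cases i
      · exact hcon.1
      · exact hcon.2.1
      · exact hcon.2.2
    rcases hune with h | h | h
    · refine ⟨!![0, 0, u 0; 1, 0, u 1; 0, 1, u 2], ?_, ?_⟩
      · rw [Matrix.det_fin_three]
        norm_num [Matrix.vecHead, Matrix.vecTail]
        simpa using h
      · intro i; fin_cases i <;> simp
    · refine ⟨!![1, 0, u 0; 0, 0, u 1; 0, 1, u 2], ?_, ?_⟩
      · rw [Matrix.det_fin_three]
        norm_num [Matrix.vecHead, Matrix.vecTail]
        simpa using h
      · intro i; fin_cases i <;> simp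
    · refine ⟨!![1, 0, u 0; 0, 1, u 1; 0, 0, u 2], ?_, ?_⟩
      · rw [Matrix.det_fin_three]
        norm_num [Matrix.vecHead, Matrix.vecTail]
        simpa using h
      · intro i; fin_cases i <;> simp
  -- Step 6: congruence transform
  set A' : Matrix (Fin 3) (Fin 3) ℚ := S.transpose * A * S with hA'def
  set B' : Matrix (Fin 3) (Fin 3) ℚ := S.transpose * B * S with hB'def
  set C' : Matrix (Fin 3) (Fin 3) ℚ := S.transpose * C * S with hC'def
  have hq' : ∀ x y z : ℚ, (x • A' + y • B' + z • C').det
      = (S.det^2 * (-A.det)) * (y^2*z - x^3 + 6*x*z^2 + 3*z^3) := by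
    intro x y z
    have hcomb : x • A' + y • B' + z • C' = S.transpose * (x • A + y • B + z • C) * S := by
      rw [hA'def, hB'def, hC'def, Matrix.mul_add, Matrix.add_mul, Matrix.mul_add,
        Matrix.add_mul, Matrix.mul_smul, Matrix.smul_mul, Matrix.mul_smul, Matrix.smul_mul,
        Matrix.mul_smul, Matrix.smul_mul]
    rw [hcomb, Matrix.det_mul, Matrix.det_mul, Matrix.det_transpose, hq x y z]
    ring
  have hc1 : S.det^2 * (-A.det) ≠ 0 := mul_ne_zero (pow_ne_zero 2 hSdet) hc0
  -- B' has zero third column (and row)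
  have hBS : ∀ j, (B * S) j 2 = 0 := by
    intro j
    have h : (B * S) j 2 = (B.mulVec u) j := by
      simp only [Matrix.mul_apply, Matrix.mulVec, dotProduct, hScol]
    rw [h, huB]
    rfl
  have hB'col : ∀ i, B' i 2 = 0 := by
    intro i
    rw [hB'def, Matrix.mul_assoc]
    simp [Matrix.mul_apply, hBS]
  -- symmetry of transformed matrices
  have hA's : A'.transpose = A' := by
    rw [hA'def]
    rw [show S.transpose * A * S = S.transpose * (A * S) from Matrix.mul_assoc _ _ _]
    rw [Matrix.transpose_mul, Matrix.transpose_mul, Matrix.transpose_transpose, hA.eq]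
    rw [Matrix.mul_assoc]
  have hB's : B'.transpose = B' := by
    rw [hB'def]
    rw [show S.transpose * B * S = S.transpose * (B * S) from Matrix.mul_assoc _ _ _]
    rw [Matrix.transpose_mul, Matrix.transpose_mul, Matrix.transpose_transpose, hB.eq]
    rw [Matrix.mul_assoc]
  have hC's : C'.transpose = C' := by
    rw [hC'def]
    rw [show S.transpose * C * S = S.transpose * (C * S) from Matrix.mul_assoc _ _ _]
    rw [Matrix.transpose_mul, Matrix.transpose_mul, Matrix.transpose_transpose, hC.eq]
    rw [Matrix.mul_assoc]
  have eA10 : A' 1 0 = A' 0 1 := Matrix.IsSymm.apply hA's 0 1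
  have eA20 : A' 2 0 = A' 0 2 := Matrix.IsSymm.apply hA's 0 2
  have eA21 : A' 2 1 = A' 1 2 := Matrix.IsSymm.apply hA's 1 2
  have eB10 : B' 1 0 = B' 0 1 := Matrix.IsSymm.apply hB's 0 1
  have eB20 : B' 2 0 = B' 0 2 := Matrix.IsSymm.apply hB's 0 2
  have eB21 : B' 2 1 = B' 1 2 := Matrix.IsSymm.apply hB's 1 2
  have eC10 : C' 1 0 = C' 0 1 := Matrix.IsSymm.apply hC's 0 1
  have eC20 : C' 2 0 = C' 0 2 := Matrix.IsSymm.apply hC's 0 2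
  have eC21 : C' 2 1 = C' 1 2 := Matrix.IsSymm.apply hC's 1 2
  -- feed key2
  apply key2 (A' 0 0) (A' 0 1) (A' 1 1) (A' 0 2) (A' 1 2) (A' 2 2)
    (C' 0 0) (C' 0 1) (C' 1 1) (C' 0 2) (C' 1 2) (C' 2 2)
    (B' 0 0) (B' 0 1) (B' 1 1) (S.det^2 * (-A.det)) hc1
  intro x y z
  have hD := hq' x y z
  rw [Matrix.det_fin_three] at hD
  simp only [Matrix.add_apply, Matrix.smul_apply, smul_eq_mul] at hD
  rw [eA10, eA20, eA21, eB10, eB20, eB21, eC10, eC20, eC21] at hD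
  rw [hB'col 0, hB'col 1, hB'col 2] at hD
  linear_combination hD
end

section
/- Fix an integer m ≥ 1 and a point e ∈ ℝ³ with e ≠ 0. Consider the set P of triples (A,B,C) of real symmetric m×m matrices satisfying e₁A + e₂B + e₃C = I_m (the identity matrix), and the map Φ : P → ℝ[x,y,z]_m sending (A,B,C) to det(xA + yB + zC), where ℝ[x,y,z]_m is the finite-dimensional space of homogeneous polynomials of degree m with its Euclidean topology. Then Φ is a proper map (preimages of compact sets are compact); in particular, the image of Φ is a closed subset of ℝ[x,y,z]_m. -/
open MvPolynomial Polynomial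

/-- The space of monic symmetric pencils: triples `(A,B,C)` of real symmetric `m × m`
matrices with `e₀A + e₁B + e₂C = I`. -/
abbrev MonicPencils (m : ℕ) (e : Fin 3 → ℝ) :=
  {T : Matrix (Fin m) (Fin m) ℝ × Matrix (Fin m) (Fin m) ℝ × Matrix (Fin m) (Fin m) ℝ //
    T.1.IsSymm ∧ T.2.1.IsSymm ∧ T.2.2.IsSymm ∧ pencilEval T.1 T.2.1 T.2.2 e = 1}

/-- The determinant map on monic symmetric pencils, composed with the coefficient
embedding of `ℝ[x,y,z]_m` into the product space `(Fin 3 →₀ ℕ) → ℝ`. -/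
noncomputable def pencilDetMap (m : ℕ) (e : Fin 3 → ℝ) (p : MonicPencils m e) :
    (Fin 3 →₀ ℕ) → ℝ :=
  fun mon => MvPolynomial.coeff mon (pencilPoly p.1.1 p.1.2.1 p.1.2.2).det


section Aux

variable {m : ℕ}

private abbrev E (m : ℕ) :=
  Matrix (Fin m) (Fin m) ℝ × Matrix (Fin m) (Fin m) ℝ × Matrix (Fin m) (Fin m) ℝ

private def coefs (T : E m) : Fin 3 → Matrix (Fin m) (Fin m) ℝ := ![T.1, T.2.1, T.2.2]

private noncomputable def msum (g : Fin m → Fin 3) : Fin 3 →₀ ℕ :=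
  ∑ i, Finsupp.single (g i) 1

private lemma prodX {n : ℕ} {ι : Type*} (s : Finset ι) (g : ι → Fin n) :
    (∏ i ∈ s, (MvPolynomial.X (g i) : MvPolynomial (Fin n) ℝ)) =
      MvPolynomial.monomial (∑ i ∈ s, Finsupp.single (g i) 1) (1 : ℝ) := by
  classical
  induction s using Finset.induction with
  | empty => simp [MvPolynomial.monomial_zero']
  | @insert a s h ih =>
    rw [Finset.prod_insert h, Finset.sum_insert h, ih, MvPolynomial.X,
      MvPolynomial.monomial_mul, one_mul]

private lemma entry_eq (T : E m) (i j : Fin m) :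
    pencilPoly T.1 T.2.1 T.2.2 i j
      = ∑ k : Fin 3, MvPolynomial.C (coefs T k i j) * MvPolynomial.X k := by
  simp [pencilPoly, coefs, Fin.sum_univ_three]

private lemma coeff_det_pencil (T : E m) (d : Fin 3 →₀ ℕ) :
    MvPolynomial.coeff d (pencilPoly T.1 T.2.1 T.2.2).det =
      ∑ σ : Equiv.Perm (Fin m), ∑ g : Fin m → Fin 3,
        (Equiv.Perm.sign σ : ℝ) * (∏ i, coefs T (g i) (σ i) i) *
          (if msum g = d then 1 else 0) := by
  classical
  rw [Matrix.det_apply']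
  rw [MvPolynomial.coeff_sum]
  refine Finset.sum_congr rfl fun σ _ => ?_
  have : (∏ i, pencilPoly T.1 T.2.1 T.2.2 (σ i) i) =
      ∑ g : Fin m → Fin 3,
        MvPolynomial.monomial (msum g) (∏ i, coefs T (g i) (σ i) i) := by
    calc (∏ i, pencilPoly T.1 T.2.1 T.2.2 (σ i) i)
        = ∏ i, ∑ k : Fin 3, MvPolynomial.C (coefs T k (σ i) i) * MvPolynomial.X k := by
          simp_rw [entry_eq]
      _ = ∑ g ∈ Fintype.piFinset (fun _ : Fin m => (Finset.univ : Finset (Fin 3))),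
            ∏ i, MvPolynomial.C (coefs T (g i) (σ i) i) * MvPolynomial.X (g i) := by
          rw [Finset.prod_univ_sum]
      _ = ∑ g : Fin m → Fin 3,
            MvPolynomial.monomial (msum g) (∏ i, coefs T (g i) (σ i) i) := by
          rw [Fintype.piFinset_univ]
          refine Finset.sum_congr rfl fun g _ => ?_
          rw [Finset.prod_mul_distrib, ← map_prod, prodX]
          rw [MvPolynomial.C_mul_monomial, mul_one, msum]
  rw [this, Finset.mul_sum, MvPolynomial.coeff_sum]
  refine Finset.sum_congr rfl fun g _ => ?_
  rw [show ((Equiv.Perm.sign σ : ℤ) : MvPolynomial (Fin 3) ℝ)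
      = MvPolynomial.C ((Equiv.Perm.sign σ : ℤ) : ℝ) from
      (map_intCast (MvPolynomial.C : ℝ →+* MvPolynomial (Fin 3) ℝ) _).symm,
    MvPolynomial.coeff_C_mul, MvPolynomial.coeff_monomial]
  split <;> ring

private lemma coeff_det_pencil_eq_zero (T : E m) (d : Fin 3 →₀ ℕ)
    (h : ∀ g : Fin m → Fin 3, msum g ≠ d) :
    MvPolynomial.coeff d (pencilPoly T.1 T.2.1 T.2.2).det = 0 := by
  rw [coeff_det_pencil]
  refine Finset.sum_eq_zero fun σ _ => Finset.sum_eq_zero fun g _ => ?_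
  rw [if_neg (h g), mul_zero]

private lemma continuous_coefs (k : Fin 3) (i j : Fin m) :
    Continuous fun T : E m => coefs T k i j := by
  fin_cases k
  · exact continuous_fst.matrix_elem i j
  · exact (continuous_fst.comp continuous_snd).matrix_elem i j
  · exact (continuous_snd.comp continuous_snd).matrix_elem i j

private lemma continuous_coeff_det (d : Fin 3 →₀ ℕ) :
    Continuous fun T : E m => MvPolynomial.coeff d (pencilPoly T.1 T.2.1 T.2.2).det := by
  simp_rw [coeff_det_pencil]
  refine continuous_finset_sum _ fun σ _ => continuous_finset_sum _ fun g _ => ?_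
  exact ((continuous_const.mul (continuous_finset_prod _ fun i _ =>
    continuous_coefs (g i) (σ i) i)).mul continuous_const)

private lemma lineRestrict_det (T : E m) (e v : Fin 3 → ℝ)
    (hT : pencilEval T.1 T.2.1 T.2.2 e = 1) :
    lineRestrict (pencilPoly T.1 T.2.1 T.2.2).det e v =
      ((Polynomial.X : Polynomial ℝ) • (1 : Matrix (Fin m) (Fin m) (Polynomial ℝ)) +
        (pencilEval T.1 T.2.1 T.2.2 v).map Polynomial.C).det := by
  rw [lineRestrict, AlgHom.map_det]
  congr 1
  refine Matrix.ext fun i j => ?_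
  have h1 := congrFun (congrFun hT i) j
  simp only [pencilEval, Matrix.add_apply, Matrix.smul_apply, smul_eq_mul] at h1
  simp only [AlgHom.mapMatrix_apply, Matrix.map_apply, pencilPoly,
    Matrix.of_apply, map_add, map_mul, MvPolynomial.aeval_C, MvPolynomial.aeval_X,
    Matrix.add_apply, Matrix.smul_apply, Matrix.one_apply, smul_eq_mul, pencilEval,
    Polynomial.algebraMap_eq]
  rw [show ((if i = j then (1 : Polynomial ℝ) else 0)) =
      Polynomial.C ((1 : Matrix (Fin m) (Fin m) ℝ) i j) by
    rw [Matrix.one_apply]; split <;> simp]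
  rw [← h1]
  simp only [map_add, map_mul]
  ring

private lemma isHermitian_of_isSymm (M : Matrix (Fin m) (Fin m) ℝ) (h : M.IsSymm) :
    M.IsHermitian := by
  rw [Matrix.IsHermitian, Matrix.conjTranspose_eq_transpose_of_trivial]; exact h

private lemma spectral_factor (M : Matrix (Fin m) (Fin m) ℝ) (hM : M.IsHermitian) :
    ((Polynomial.X : Polynomial ℝ) • (1 : Matrix (Fin m) (Fin m) (Polynomial ℝ)) +
      M.map Polynomial.C).det = ∏ i, (Polynomial.X + Polynomial.C (hM.eigenvalues i)) := by
  set U : Matrix (Fin m) (Fin m) ℝ := (hM.eigenvectorUnitary : Matrix (Fin m) (Fin m) ℝ)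
  have hUU : U * star U = 1 := (Matrix.mem_unitaryGroup_iff).mp hM.eigenvectorUnitary.2
  have hspec : M = U * Matrix.diagonal hM.eigenvalues * star U := by
    simpa using hM.spectral_theorem
  have key : (Polynomial.X : Polynomial ℝ) • (1 : Matrix (Fin m) (Fin m) (Polynomial ℝ)) +
      M.map Polynomial.C =
      (U.map Polynomial.C) *
        ((Polynomial.X : Polynomial ℝ) • 1 +
          (Matrix.diagonal hM.eigenvalues).map Polynomial.C) *
        ((star U).map Polynomial.C) := by
    rw [mul_add, add_mul]
    rw [Matrix.mul_smul, mul_one, Matrix.smul_mul, ← Matrix.map_mul, ← Matrix.map_mul,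
      ← Matrix.map_mul, hUU, ← hspec]
    simp [Matrix.map_one]
  rw [key, Matrix.det_mul, Matrix.det_mul, mul_comm, ← mul_assoc, ← Matrix.det_mul,
    ← Matrix.map_mul]
  rw [show (star U) * U = 1 from (Matrix.mem_unitaryGroup_iff').mp hM.eigenvectorUnitary.2]
  rw [Matrix.map_one Polynomial.C Polynomial.C_0 Polynomial.C_1, Matrix.det_one, one_mul]
  rw [show ((Polynomial.X : Polynomial ℝ) • (1 : Matrix (Fin m) (Fin m) (Polynomial ℝ)) +
      (Matrix.diagonal hM.eigenvalues).map Polynomial.C)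
      = Matrix.diagonal fun i => Polynomial.X + Polynomial.C (hM.eigenvalues i) by
    ext i j
    by_cases h : i = j <;>
      simp [h, Matrix.diagonal, Matrix.one_apply, Matrix.map_apply]]
  rw [Matrix.det_diagonal]

private lemma trace_sq (M : Matrix (Fin m) (Fin m) ℝ) (hM : M.IsHermitian) :
    Matrix.trace (M * M) = ∑ i, (hM.eigenvalues i) ^ 2 := by
  set U : Matrix (Fin m) (Fin m) ℝ := (hM.eigenvectorUnitary : Matrix (Fin m) (Fin m) ℝ)
  have hUU : star U * U = 1 := (Matrix.mem_unitaryGroup_iff').mp hM.eigenvectorUnitary.2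
  have hspec : M = U * Matrix.diagonal hM.eigenvalues * star U := by
    simpa using hM.spectral_theorem
  have hM2 : M * M
      = U * (Matrix.diagonal hM.eigenvalues * Matrix.diagonal hM.eigenvalues) * star U := by
    conv_lhs => rw [hspec]
    calc U * Matrix.diagonal hM.eigenvalues * star U *
          (U * Matrix.diagonal hM.eigenvalues * star U)
        = U * (Matrix.diagonal hM.eigenvalues *
            ((star U * U) * (Matrix.diagonal hM.eigenvalues * star U))) := by
          simp only [Matrix.mul_assoc]
      _ = U * (Matrix.diagonal hM.eigenvalues * Matrix.diagonal hM.eigenvalues) * star U := by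
          rw [hUU, Matrix.one_mul]; simp only [Matrix.mul_assoc]
  rw [hM2, Matrix.trace_mul_cycle, ← Matrix.mul_assoc, hUU, Matrix.one_mul,
    Matrix.diagonal_mul_diagonal, Matrix.trace_diagonal]
  simp [sq]

private lemma entry_bound (M : Matrix (Fin m) (Fin m) ℝ) (hM : M.IsHermitian) (B : ℝ)
    (hB : 0 ≤ B) (hev : ∀ i, |hM.eigenvalues i| ≤ B) (i j : Fin m) :
    |M i j| ≤ Real.sqrt m * B := by
  have htr : Matrix.trace (M * M) = ∑ i', ∑ j', (M i' j') ^ 2 := by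
    rw [Matrix.trace]
    refine Finset.sum_congr rfl fun i' _ => ?_
    rw [Matrix.diag_apply, Matrix.mul_apply]
    refine Finset.sum_congr rfl fun j' _ => ?_
    rw [sq, ← hM.apply j' i']
    simp
  have hsq : (M i j) ^ 2 ≤ (m : ℝ) * B ^ 2 := by
    have h1 : (M i j) ^ 2 ≤ ∑ i', ∑ j', (M i' j') ^ 2 := by
      calc (M i j) ^ 2 ≤ ∑ j', (M i j') ^ 2 :=
            Finset.single_le_sum (fun k _ => sq_nonneg (M i k)) (Finset.mem_univ j)
        _ ≤ ∑ i', ∑ j', (M i' j') ^ 2 :=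
            Finset.single_le_sum (f := fun i' => ∑ j', (M i' j') ^ 2)
              (fun k _ => Finset.sum_nonneg fun l _ => sq_nonneg _) (Finset.mem_univ i)
    have h2 : ∑ i', ∑ j', (M i' j') ^ 2 = ∑ k, (hM.eigenvalues k) ^ 2 := by
      rw [← htr, trace_sq M hM]
    have h3 : ∑ k, (hM.eigenvalues k) ^ 2 ≤ (m : ℝ) * B ^ 2 := by
      calc ∑ k, (hM.eigenvalues k) ^ 2 ≤ ∑ _k : Fin m, B ^ 2 := by
            refine Finset.sum_le_sum fun k _ => ?_
            rw [← sq_abs]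
            exact pow_le_pow_left₀ (abs_nonneg _) (hev k) 2
        _ = (m : ℝ) * B ^ 2 := by simp [mul_comm]
    linarith
  calc |M i j| = Real.sqrt ((M i j) ^ 2) := (Real.sqrt_sq_eq_abs _).symm
    _ ≤ Real.sqrt ((m : ℝ) * B ^ 2) := Real.sqrt_le_sqrt hsq
    _ = Real.sqrt m * B := by
        rw [Real.sqrt_mul (by positivity), Real.sqrt_sq hB]

private lemma root_bound (p : Polynomial ℝ) (hp : p.Monic) (hn : 1 ≤ p.natDegree)
    (x : ℝ) (hx : p.eval x = 0) :
    |x| ≤ 1 + ∑ k ∈ Finset.range p.natDegree, |p.coeff k| := by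
  set n := p.natDegree with hN
  set S := ∑ k ∈ Finset.range n, |p.coeff k| with hS
  have hS0 : 0 ≤ S := Finset.sum_nonneg fun k _ => abs_nonneg _
  rcases le_or_gt |x| 1 with h | h
  · linarith
  have hxpow : x ^ n = -∑ k ∈ Finset.range n, p.coeff k * x ^ k := by
    have := Polynomial.eval_eq_sum_range (p := p) x
    rw [Finset.sum_range_succ, ← hN, hp.coeff_natDegree, one_mul, hx] at this
    linarith [this]
  have hb : |x| ^ n ≤ S * |x| ^ (n - 1) := by
    rw [← abs_pow, hxpow, abs_neg]
    calc |∑ k ∈ Finset.range n, p.coeff k * x ^ k|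
        ≤ ∑ k ∈ Finset.range n, |p.coeff k * x ^ k| := Finset.abs_sum_le_sum_abs _ _
      _ ≤ ∑ k ∈ Finset.range n, |p.coeff k| * |x| ^ (n - 1) := by
          refine Finset.sum_le_sum fun k hk => ?_
          rw [abs_mul, abs_pow]
          refine mul_le_mul_of_nonneg_left ?_ (abs_nonneg _)
          have hk' : k ≤ n - 1 := by
            have := Finset.mem_range.mp hk; omega
          exact pow_le_pow_right₀ (le_of_lt h) hk'
      _ = S * |x| ^ (n - 1) := by rw [← Finset.sum_mul]
  have hpow : |x| ^ n = |x| * |x| ^ (n - 1) := by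
    rw [← pow_succ']
    congr 1
    omega
  have hpos : 0 < |x| ^ (n - 1) := pow_pos (by linarith) _
  have : |x| ≤ S := by
    rw [hpow] at hb
    exact le_of_mul_le_mul_right hb hpos
  linarith

private noncomputable def Dset (m : ℕ) : Finset (Fin 3 →₀ ℕ) :=
  Finset.image (msum (m := m)) Finset.univ

private noncomputable def lineCoeffFun (m : ℕ) (e v : Fin 3 → ℝ) (j : ℕ) :
    ((Fin 3 →₀ ℕ) → ℝ) → ℝ :=
  fun y => ∑ d ∈ Dset m, y d *
    ((d.prod fun i n => (Polynomial.C (e i) * Polynomial.X + Polynomial.C (v i)) ^ n).coeff j)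

private lemma continuous_lineCoeffFun (m : ℕ) (e v : Fin 3 → ℝ) (j : ℕ) :
    Continuous (lineCoeffFun m e v j) :=
  continuous_finset_sum _ fun d _ => (continuous_apply d).mul continuous_const

private lemma lineCoeff_eq (f : MvPolynomial (Fin 3) ℝ) (hsupp : f.support ⊆ Dset m)
    (e v : Fin 3 → ℝ) (j : ℕ) :
    (lineRestrict f e v).coeff j = lineCoeffFun m e v j (fun d => MvPolynomial.coeff d f) := by
  rw [lineRestrict]
  conv_lhs => rw [f.as_sum]
  rw [map_sum]
  rw [Finset.sum_subset hsupp (fun d _ hd => by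
    rw [MvPolynomial.notMem_support_iff.mp hd, MvPolynomial.monomial_zero, map_zero])]
  rw [Polynomial.finset_sum_coeff, lineCoeffFun]
  refine Finset.sum_congr rfl fun d _ => ?_
  rw [MvPolynomial.aeval_monomial, Polynomial.algebraMap_eq, Polynomial.coeff_C_mul]

private lemma pencilEval_single (T : E m) (k : Fin 3) :
    pencilEval T.1 T.2.1 T.2.2 (Pi.single k 1) = coefs T k := by
  fin_cases k <;>
    simp [pencilEval, coefs, Pi.single_eq_same, Pi.single_eq_of_ne]

end Aux

/-- Properness of the determinant map on monic symmetric pencils.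
For `m ≥ 1` and `e ≠ 0`, the map sending a triple `(A,B,C)` of real symmetric `m × m`
matrices with `e₀A + e₁B + e₂C = I` to `det(xA + yB + zC) ∈ ℝ[x,y,z]_m` is proper; in
particular its image is closed. -/
theorem stmt_19 (m : ℕ) (hm : 1 ≤ m) (e : Fin 3 → ℝ) (he : e ≠ 0) :
    IsProperMap (pencilDetMap m e) ∧ IsClosed (Set.range (pencilDetMap m e)) := by
  classical
  have hcont : Continuous (pencilDetMap m e) :=
    continuous_pi fun d => (continuous_coeff_det d).comp continuous_subtype_val
  have hproper : IsProperMap (pencilDetMap m e) := by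
    rw [isProperMap_iff_isCompact_preimage]
    refine ⟨hcont, fun K hK => ?_⟩
    -- bounds from compactness of K
    choose Rb hRb using fun (k : Fin 3) (j : ℕ) =>
      (hK.image ((continuous_abs).comp (continuous_lineCoeffFun m e (Pi.single k 1) j))).bddAbove
    set R0 : ℝ := ∑ k : Fin 3, ∑ j ∈ Finset.range m, max (Rb k j) 0 with hR0def
    have hR0 : 0 ≤ R0 :=
      Finset.sum_nonneg fun k _ => Finset.sum_nonneg fun j _ => le_max_right _ _
    have hFbound : ∀ y ∈ K, ∀ k : Fin 3, ∀ j ∈ Finset.range m,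
        |lineCoeffFun m e (Pi.single k 1) j y| ≤ R0 := by
      intro y hy k j hj
      have h1 : |lineCoeffFun m e (Pi.single k 1) j y| ≤ Rb k j :=
        hRb k j (Set.mem_image_of_mem _ hy)
      have h2 : max (Rb k j) 0 ≤ R0 := by
        calc max (Rb k j) 0 ≤ ∑ j' ∈ Finset.range m, max (Rb k j') 0 :=
              Finset.single_le_sum (f := fun j' => max (Rb k j') 0)
                (fun _ _ => le_max_right _ _) hj
          _ ≤ R0 :=
              Finset.single_le_sum
                (f := fun k' => ∑ j' ∈ Finset.range m, max (Rb k' j') 0)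
                (fun _ _ => Finset.sum_nonneg fun _ _ => le_max_right _ _)
                (Finset.mem_univ k)
      exact le_trans (le_trans h1 (le_max_left _ _)) h2
    set R : ℝ := Real.sqrt m * (1 + m * R0) with hRdef
    -- entry bound on the preimage
    have hEntry : ∀ T : MonicPencils m e, pencilDetMap m e T ∈ K →
        ∀ (k : Fin 3) (i j : Fin m), |coefs T.val k i j| ≤ R := by
      intro T hTK k i j
      obtain ⟨hs1, hs2, hs3, hmon⟩ := T.2
      set M := pencilEval T.val.1 T.val.2.1 T.val.2.2 (Pi.single k 1) with hMdef
      have hMc : M = coefs T.val k := pencilEval_single T.val k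
      have hMsymm : M.IsSymm := by
        rw [hMc]; fin_cases k
        · simpa [coefs] using hs1
        · simpa [coefs] using hs2
        · simpa [coefs] using hs3
      have hM : M.IsHermitian := isHermitian_of_isSymm M hMsymm
      have hsupp : (pencilPoly T.val.1 T.val.2.1 T.val.2.2).det.support ⊆ Dset m := by
        intro d hd
        by_contra hnd
        refine MvPolynomial.mem_support_iff.mp hd ?_
        refine coeff_det_pencil_eq_zero T.val d fun g hg => ?_
        exact hnd (hg ▸ Finset.mem_image_of_mem _ (Finset.mem_univ g))
      set q := lineRestrict (pencilPoly T.val.1 T.val.2.1 T.val.2.2).det e (Pi.single k 1)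
        with hqdef
      have hq : q = ∏ i', (Polynomial.X + Polynomial.C (hM.eigenvalues i')) := by
        rw [hqdef, lineRestrict_det T.val e (Pi.single k 1) hmon, spectral_factor M hM]
      have hqmonic : q.Monic := by
        rw [hq]
        exact Polynomial.monic_prod_of_monic _ _ fun _ _ => Polynomial.monic_X_add_C _
      have hqdeg : q.natDegree = m := by
        rw [hq, Polynomial.natDegree_prod_of_monic _ _
          (fun _ _ => Polynomial.monic_X_add_C _)]
        simp [Polynomial.natDegree_X_add_C]
      have hcoeffs : ∀ j' ∈ Finset.range m, |q.coeff j'| ≤ R0 := by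
        intro j' hj'
        rw [hqdef, lineCoeff_eq _ hsupp e (Pi.single k 1) j']
        exact hFbound _ hTK k j' hj'
      have heig : ∀ i', |hM.eigenvalues i'| ≤ 1 + m * R0 := by
        intro i'
        have hroot : q.eval (-(hM.eigenvalues i')) = 0 := by
          rw [hq, Polynomial.eval_prod]
          exact Finset.prod_eq_zero (Finset.mem_univ i') (by simp)
        have hb := root_bound q hqmonic (by rw [hqdeg]; exact hm) _ hroot
        rw [abs_neg] at hb
        have hsum : ∑ j' ∈ Finset.range q.natDegree, |q.coeff j'| ≤ m * R0 := by
          rw [hqdeg]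
          calc ∑ j' ∈ Finset.range m, |q.coeff j'| ≤ ∑ _j' ∈ Finset.range m, R0 :=
                Finset.sum_le_sum hcoeffs
            _ = m * R0 := by simp [mul_comm]
        linarith
      have := entry_bound M hM (1 + m * R0) (by positivity) heig i j
      rw [hMc] at this
      exact this
    -- assemble compactness
    rw [Subtype.isCompact_iff]
    have hSeq : Subtype.val '' (pencilDetMap m e ⁻¹' K) =
        {T : E m | (T.1.IsSymm ∧ T.2.1.IsSymm ∧ T.2.2.IsSymm ∧
          pencilEval T.1 T.2.1 T.2.2 e = 1) ∧
          (fun d => MvPolynomial.coeff d (pencilPoly T.1 T.2.1 T.2.2).det) ∈ K} := by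
      ext T
      constructor
      · rintro ⟨⟨T', hT'⟩, hmem, rfl⟩
        exact ⟨hT', hmem⟩
      · rintro ⟨hp, hmem⟩
        exact ⟨⟨T, hp⟩, hmem, rfl⟩
    rw [hSeq]
    have hbox : IsCompact ((Set.univ.pi fun _ : Fin m => Set.univ.pi fun _ : Fin m =>
        Set.Icc (-R) R) ×ˢ ((Set.univ.pi fun _ : Fin m => Set.univ.pi fun _ : Fin m =>
        Set.Icc (-R) R) ×ˢ (Set.univ.pi fun _ : Fin m => Set.univ.pi fun _ : Fin m =>
        Set.Icc (-R) R)) : Set (E m)) := by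
      have hc : IsCompact (Set.univ.pi fun _ : Fin m => Set.univ.pi fun _ : Fin m =>
          Set.Icc (-R) R : Set (Matrix (Fin m) (Fin m) ℝ)) :=
        isCompact_univ_pi fun _ => isCompact_univ_pi fun _ => isCompact_Icc
      exact hc.prod (hc.prod hc)
    refine IsCompact.of_isClosed_subset hbox ?_ ?_
    · -- closedness
      have h1 : IsClosed {T : E m | T.1.IsSymm} :=
        isClosed_eq continuous_fst.matrix_transpose continuous_fst
      have h2 : IsClosed {T : E m | T.2.1.IsSymm} :=
        isClosed_eq (continuous_fst.comp continuous_snd).matrix_transpose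
          (continuous_fst.comp continuous_snd)
      have h3 : IsClosed {T : E m | T.2.2.IsSymm} :=
        isClosed_eq (continuous_snd.comp continuous_snd).matrix_transpose
          (continuous_snd.comp continuous_snd)
      have h4 : IsClosed {T : E m | pencilEval T.1 T.2.1 T.2.2 e = 1} := by
        refine isClosed_eq ?_ continuous_const
        exact ((continuous_fst.const_smul (e 0)).add
          ((continuous_fst.comp continuous_snd).const_smul (e 1))).add
          ((continuous_snd.comp continuous_snd).const_smul (e 2))
      have h5 : IsClosed {T : E m |
          (fun d => MvPolynomial.coeff d (pencilPoly T.1 T.2.1 T.2.2).det) ∈ K} :=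
        hK.isClosed.preimage (continuous_pi fun d => continuous_coeff_det d)
      have : {T : E m | (T.1.IsSymm ∧ T.2.1.IsSymm ∧ T.2.2.IsSymm ∧
          pencilEval T.1 T.2.1 T.2.2 e = 1) ∧
          (fun d => MvPolynomial.coeff d (pencilPoly T.1 T.2.1 T.2.2).det) ∈ K}
          = ({T : E m | T.1.IsSymm} ∩ {T : E m | T.2.1.IsSymm} ∩ {T : E m | T.2.2.IsSymm}
            ∩ {T : E m | pencilEval T.1 T.2.1 T.2.2 e = 1})
            ∩ {T : E m |
              (fun d => MvPolynomial.coeff d (pencilPoly T.1 T.2.1 T.2.2).det) ∈ K} := by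
        ext T
        simp only [Set.mem_setOf_eq, Set.mem_inter_iff]
        tauto
      rw [this]
      exact (((h1.inter h2).inter h3).inter h4).inter h5
    · -- boundedness
      rintro T ⟨hp, hmem⟩
      have hE := hEntry ⟨T, hp⟩ hmem
      have hb : ∀ (k : Fin 3) (i j : Fin m), coefs T k i j ∈ Set.Icc (-R) R := by
        intro k i j
        rcases abs_le.mp (hE k i j) with ⟨hl, hr⟩
        exact ⟨hl, hr⟩
      refine ⟨?_, ?_, ?_⟩
      · exact Set.mem_univ_pi.mpr fun i => Set.mem_univ_pi.mpr fun j => hb 0 i j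
      · exact Set.mem_univ_pi.mpr fun i => Set.mem_univ_pi.mpr fun j => hb 1 i j
      · exact Set.mem_univ_pi.mpr fun i => Set.mem_univ_pi.mpr fun j => hb 2 i j
  exact ⟨hproper, hproper.isClosedMap.isClosed_range⟩
end
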